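/- arXiv:1904.02799 — 4 statements merged into one kernel-verified Lean document; each statement's English description precedes it below -/
import Mathlib

section
/- If D is a digraph with no induced blocking odd cycle and the underlying graph of D is a cycle, then D is BE-diperfect. -/
open Relation

variable {V : Type*}

/-- `u` and `v` are adjacent in the digraph with arc relation `A`. -/
def DAdj (A : V → V → Prop) (u v : V) : Prop := A u v ∨ A v u

/-- `v` is a source: no arc enters `v`. -/
def IsSource (A : V → V → Prop) (v : V) : Prop := ∀ u, ¬ A u v

/-- `v` is a sink: no arc leaves `v`. -/
def IsSink (A : V → V → Prop) (v : V) : Prop := ∀ u, ¬ A v u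

/-- A stable (independent) set of the digraph. -/
def IsStable (A : V → V → Prop) (S : Set V) : Prop :=
  ∀ u ∈ S, ∀ v ∈ S, u ≠ v → ¬ DAdj A u v

/-- The stability number. -/
noncomputable def alphaNum (A : V → V → Prop) : ℕ :=
  sSup {n | ∃ S : Set V, IsStable A S ∧ S.ncard = n}

/-- A maximum stable set. -/
def IsMaxStable (A : V → V → Prop) (S : Set V) : Prop :=
  IsStable A S ∧ ∀ T : Set V, IsStable A T → T.ncard ≤ S.ncard

/-- A (nonempty) directed path, given as its list of vertices. -/
def IsDiPath (A : V → V → Prop) (l : List V) : Prop :=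
  l ≠ [] ∧ l.Nodup ∧ l.Chain' A

/-- A path partition of the digraph: every vertex lies on exactly one of the paths. -/
def IsPathPartition (A : V → V → Prop) (P : Set (List V)) : Prop :=
  (∀ l ∈ P, IsDiPath A l) ∧ ∀ v : V, ∃! l, l ∈ P ∧ v ∈ l

/-- An `S`-path partition: each path contains exactly one vertex of `S`. -/
def IsSPartition (A : V → V → Prop) (S : Set V) (P : Set (List V)) : Prop :=
  IsPathPartition A P ∧ ∀ l ∈ P, ∃! s, s ∈ l ∧ s ∈ S

/-- An `S`-BE-path partition: each path contains exactly one vertex of `S`,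
which is moreover an endpoint of the path. -/
def IsBEPartition (A : V → V → Prop) (S : Set V) (P : Set (List V)) : Prop :=
  IsSPartition A S P ∧
    ∀ l ∈ P, ∀ s ∈ l, s ∈ S → l.head? = some s ∨ l.getLast? = some s

/-- The α-property: every maximum stable set admits an `S`-path partition. -/
def AlphaProperty (A : V → V → Prop) : Prop :=
  ∀ S : Set V, IsMaxStable A S → ∃ P, IsSPartition A S P

/-- The BE-property: every maximum stable set admits an `S`-BE-path partition. -/
def BEProperty (A : V → V → Prop) : Prop :=
  ∀ S : Set V, IsMaxStable A S → ∃ P, IsBEPartition A S P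

/-- α-diperfect: every induced subdigraph satisfies the α-property. -/
def AlphaDiperfect (A : V → V → Prop) : Prop :=
  ∀ W : Set V, AlphaProperty (fun a b : W => A a.1 b.1)

/-- BE-diperfect: every induced subdigraph satisfies the BE-property. -/
def BEDiperfect (A : V → V → Prop) : Prop :=
  ∀ W : Set V, BEProperty (fun a b : W => A a.1 b.1)

/-- Mutual reachability. -/
def MutReach (A : V → V → Prop) (u v : V) : Prop :=
  ReflTransGen A u v ∧ ReflTransGen A v u

/-- Semicomplete digraph: any two distinct vertices are adjacent. -/
def Semicomplete (A : V → V → Prop) : Prop :=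
  ∀ u v : V, u ≠ v → DAdj A u v

/-- Strongly connected digraph. -/
def Strong (A : V → V → Prop) : Prop :=
  ∀ u v : V, ReflTransGen A u v

/-- The digraph has an induced transitive triangle. -/
def HasInducedTransitiveTriangle (A : V → V → Prop) : Prop :=
  ∃ a b c : V, a ≠ b ∧ a ≠ c ∧ b ≠ c ∧
    A a b ∧ A a c ∧ A c b ∧ ¬ A b a ∧ ¬ A c a ∧ ¬ A b c

/-- The digraph is a blocking odd cycle: its underlying graph is an odd cycle
`x_1 x_2 ⋯ x_{2k+1} x_1` (with `k ≥ 1`; here `x i` is `x_{i+1}`), and both `x_1`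
and `x_2` are each a source or a sink. -/
def IsBlockingOddCycle (A : V → V → Prop) : Prop :=
  ∃ (k : ℕ) (x : ZMod (2 * k + 1) → V), 1 ≤ k ∧ Function.Bijective x ∧
    (∀ i j, DAdj A (x i) (x j) ↔ (j = i + 1 ∨ i = j + 1)) ∧
    (IsSource A (x 0) ∨ IsSink A (x 0)) ∧
    (IsSource A (x 1) ∨ IsSink A (x 1))

/-- The digraph is an anti-directed odd cycle: its underlying graph is an odd cycle
`x_1 ⋯ x_{2k+1} x_1` with `k ≥ 2` (here `x m` is `x_{m+1}`), and each of
`x_1, x_2, x_3, x_4, x_6, x_8, …, x_{2k}` is a source or a sink. -/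
def IsAntiDirectedOddCycle (A : V → V → Prop) : Prop :=
  ∃ (k : ℕ) (x : ZMod (2 * k + 1) → V), 2 ≤ k ∧ Function.Bijective x ∧
    (∀ i j, DAdj A (x i) (x j) ↔ (j = i + 1 ∨ i = j + 1)) ∧
    ∀ m : ℕ, m ≤ 2 * k →
      (m ≤ 3 ∨ (5 ≤ m ∧ m ≤ 2 * k - 1 ∧ Odd m)) →
      (IsSource A (x (m : ZMod (2 * k + 1))) ∨ IsSink A (x (m : ZMod (2 * k + 1))))

/-- `v` is a universal vertex. -/
def IsUniversal (A : V → V → Prop) (v : V) : Prop := ∀ u, u ≠ v → DAdj A u v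

/-- The underlying simple graph of a digraph. -/
def underlyingGraph (A : V → V → Prop) : SimpleGraph V where
  Adj u v := u ≠ v ∧ DAdj A u v
  symm := ⟨fun _ _ h => ⟨h.1.symm, h.2.symm⟩⟩
  loopless := ⟨fun _ h => h.1 rfl⟩

/-- The underlying graph of the digraph is a cycle. -/
def UnderlyingIsCycle (A : V → V → Prop) : Prop :=
  ∃ (n : ℕ) (x : ZMod n → V), 3 ≤ n ∧ Function.Bijective x ∧
    ∀ i j, DAdj A (x i) (x j) ↔ (j = i + 1 ∨ i = j + 1)

/-- A perfect graph: every induced subgraph has chromatic number equal to its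
clique number. -/
def GraphPerfect (G : SimpleGraph V) : Prop :=
  ∀ W : Set V, (G.induce W).chromaticNumber = ((G.induce W).cliqueNum : ℕ∞)

/-- A Hamilton directed path whose endpoints are `{s, t}` (in some order). -/
def HamiltonPathBetween (A : V → V → Prop) (s t : V) : Prop :=
  ∃ l : List V, IsDiPath A l ∧ (∀ v : V, v ∈ l) ∧
    ((l.head? = some s ∧ l.getLast? = some t) ∨
      (l.head? = some t ∧ l.getLast? = some s))

/-- A Hamilton directed path starting at `s` and ending at `t`. -/
def HamiltonPathFromTo (A : V → V → Prop) (s t : V) : Prop :=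
  ∃ l : List V, IsDiPath A l ∧ (∀ v : V, v ∈ l) ∧
    l.head? = some s ∧ l.getLast? = some t

/-- The exceptional strong semicomplete digraph on four vertices
(`a,b,c,d = 0,1,2,3`): the 4-cycle `a→d→c→b→a` together with digons `a↔c`, `b↔d`. -/
def BadFour : Fin 4 → Fin 4 → Prop := fun u v =>
  (u, v) ∈ ({(0,3), (3,2), (2,1), (1,0), (0,2), (2,0), (1,3), (3,1)} :
    Set (Fin 4 × Fin 4))

/-- A locally in-semicomplete digraph: any two in-neighbours of a vertex are adjacent. -/
def LocallyInSemicomplete (A : V → V → Prop) : Prop :=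
  ∀ v u w : V, A u v → A w v → u ≠ w → DAdj A u w

/-- A strong component: a maximal set of pairwise mutually reachable vertices. -/
def IsStrongComponent (A : V → V → Prop) (X : Set V) : Prop :=
  X.Nonempty ∧ (∀ u ∈ X, ∀ v ∈ X, MutReach A u v) ∧
    ∀ u v, v ∈ X → MutReach A u v → u ∈ X

/-- `C` is the vertex set of an induced cycle of `G`. -/
def InducedCycleSet (G : SimpleGraph V) (C : Set V) : Prop :=
  ∃ (n : ℕ) (x : ZMod n → V), 3 ≤ n ∧ Function.Injective x ∧ Set.range x = C ∧
    ∀ i j, G.Adj (x i) (x j) ↔ (j = i + 1 ∨ i = j + 1)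

/-- `G` contains a subdivision of `K₄`: four branch vertices joined by
pairwise internally disjoint paths. -/
def HasK4Subdivision (G : SimpleGraph V) : Prop :=
  ∃ (b : Fin 4 → V) (P : ∀ i j : Fin 4, G.Walk (b i) (b j)),
    Function.Injective b ∧
    (∀ i j, i ≠ j → (P i j).IsPath) ∧
    (∀ i j m, i ≠ j → b m ∈ (P i j).support → m = i ∨ m = j) ∧
    (∀ i j k l, i ≠ j → k ≠ l → ({i, j} : Finset (Fin 4)) ≠ {k, l} →
      ∀ v, v ∈ (P i j).support → v ∈ (P k l).support →
        (v = b i ∨ v = b j) ∧ (v = b k ∨ v = b l))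

/-- 2-connected: connected, at least 3 vertices, and no cut vertex. -/
def TwoConnected (G : SimpleGraph V) : Prop :=
  G.Connected ∧ 3 ≤ Nat.card V ∧
    ∀ v : V, (G.induce {u | u ≠ v}).Preconnected


section Aux
set_option linter.unusedSectionVars false
set_option linter.unusedVariables false
variable {V : Type*}

/-- auxiliary: a good partial BE-partition covering vertex set `U`. -/
def GoodPart (A : V → V → Prop) (S U : Set V) (P : Set (List V)) : Prop :=
  (∀ l ∈ P, IsDiPath A l) ∧ (∀ l ∈ P, ∀ v ∈ l, v ∈ U) ∧
  (∀ v ∈ U, ∃! l, l ∈ P ∧ v ∈ l) ∧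
  (∀ l ∈ P, ∃! s, s ∈ l ∧ s ∈ S) ∧
  (∀ l ∈ P, ∀ s ∈ l, s ∈ S → l.head? = some s ∨ l.getLast? = some s)

lemma goodPart_empty (A : V → V → Prop) (S : Set V) : GoodPart A S ∅ ∅ := by
  refine ⟨?_, ?_, ?_, ?_, ?_⟩ <;> simp

lemma goodPart_congr {A : V → V → Prop} {S S' U : Set V} {P : Set (List V)}
    (h : GoodPart A S U P) (hSS : S ∩ U = S' ∩ U) : GoodPart A S' U P := by
  obtain ⟨h1, h2, h3, h4, h5⟩ := h
  have key : ∀ l ∈ P, ∀ v ∈ l, (v ∈ S ↔ v ∈ S') := by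
    intro l hl v hv
    have hU : v ∈ U := h2 l hl v hv
    constructor
    · intro hvS; exact ((Set.ext_iff.1 hSS v).1 ⟨hvS, hU⟩).1
    · intro hvS; exact ((Set.ext_iff.1 hSS v).2 ⟨hvS, hU⟩).1
  refine ⟨h1, h2, h3, ?_, ?_⟩
  · intro l hl
    obtain ⟨s, ⟨hs1, hs2⟩, hs3⟩ := h4 l hl
    exact ⟨s, ⟨hs1, (key l hl s hs1).1 hs2⟩, fun t ⟨ht1, ht2⟩ => hs3 t ⟨ht1, (key l hl t ht1).2 ht2⟩⟩
  · intro l hl s hs hsS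
    exact h5 l hl s hs ((key l hl s hs).2 hsS)

lemma goodPart_insert {A : V → V → Prop} {S U U' : Set V} {P : Set (List V)}
    (h : GoodPart A S U P) (l : List V) (hl : IsDiPath A l)
    (hsub : ∀ v ∈ l, v ∈ U') (hdisj : ∀ v ∈ l, v ∉ U)
    (hUsub : U ⊆ U') (hcov : ∀ v ∈ U', v ∉ U → v ∈ l)
    (hone : ∃! s, s ∈ l ∧ s ∈ S)
    (hend : ∀ s ∈ l, s ∈ S → l.head? = some s ∨ l.getLast? = some s) :
    GoodPart A S U' (insert l P) := by
  obtain ⟨h1, h2, h3, h4, h5⟩ := h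
  refine ⟨?_, ?_, ?_, ?_, ?_⟩
  · rintro l' (rfl | hl')
    · exact hl
    · exact h1 l' hl'
  · rintro l' (rfl | hl') v hv
    · exact hsub v hv
    · exact hUsub (h2 l' hl' v hv)
  · intro v hv
    by_cases hvU : v ∈ U
    · obtain ⟨l0, ⟨hl01, hl02⟩, hl03⟩ := h3 v hvU
      refine ⟨l0, ⟨Or.inr hl01, hl02⟩, ?_⟩
      rintro l1 ⟨(rfl | hl1), hv1⟩
      · exact absurd hvU (hdisj v hv1)
      · exact hl03 l1 ⟨hl1, hv1⟩
    · refine ⟨l, ⟨Or.inl rfl, hcov v hv hvU⟩, ?_⟩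
      rintro l1 ⟨(rfl | hl1), hv1⟩
      · rfl
      · exact absurd (h2 l1 hl1 v hv1) hvU
  · rintro l' (rfl | hl')
    · exact hone
    · exact h4 l' hl'
  · rintro l' (rfl | hl')
    · exact hend
    · exact h5 l' hl'


lemma map_val_pmap_mk {W : Set V} (l : List V) (h : ∀ v ∈ l, v ∈ W) :
    (l.pmap (fun v hv => (⟨v, hv⟩ : W)) h).map Subtype.val = l := by
  induction l with
  | nil => rfl
  | cons a t ih => simp only [List.pmap, List.map_cons]; exact congrArg _ (ih _)

lemma goodPart_transfer {A : V → V → Prop} {W : Set V} {S_W : Set ↥W} {P : Set (List V)}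
    (h : GoodPart A (Subtype.val '' S_W) W P) :
    IsBEPartition (fun a b : W => A a.1 b.1) S_W
      {l' : List ↥W | l'.map Subtype.val ∈ P} := by
  obtain ⟨h1, h2, h3, h4, h5⟩ := h
  have memS : ∀ (s : ↥W), (s : V) ∈ Subtype.val '' S_W ↔ s ∈ S_W := by
    intro s
    constructor
    · rintro ⟨t, ht, hts⟩; rwa [Subtype.val_injective hts] at ht
    · intro hs; exact ⟨s, hs, rfl⟩
  have memL : ∀ (v : ↥W) (l' : List ↥W), v ∈ l' ↔ (v : V) ∈ l'.map Subtype.val := by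
    intro v l'
    simp only [List.mem_map]
    exact ⟨fun h => ⟨v, h, rfl⟩, fun ⟨a, ha, hav⟩ => (Subtype.val_injective hav) ▸ ha⟩
  refine ⟨⟨⟨?_, ?_⟩, ?_⟩, ?_⟩
  · intro l' hl'
    obtain ⟨hne, hnd, hch⟩ := h1 _ hl'
    refine ⟨fun hl => hne (by simp [hl]), List.Nodup.of_map _ hnd, ?_⟩
    exact (List.isChain_map Subtype.val).1 hch
  · intro v
    obtain ⟨l, ⟨hlP, hvl⟩, huniq⟩ := h3 (v : V) v.2
    have hlW : ∀ u ∈ l, u ∈ W := h2 l hlP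
    refine ⟨l.pmap (fun v hv => (⟨v, hv⟩ : W)) hlW, ⟨?_, ?_⟩, ?_⟩
    · show _ ∈ P; rw [map_val_pmap_mk]; exact hlP
    · rw [memL, map_val_pmap_mk]; exact hvl
    · intro l' ⟨hl'P, hvl'⟩
      have := huniq (l'.map Subtype.val) ⟨hl'P, (memL v l').1 hvl'⟩
      apply List.map_injective_iff.2 Subtype.val_injective
      rw [this, map_val_pmap_mk]
  · intro l' hl'
    obtain ⟨s, ⟨hs1, hs2⟩, hs3⟩ := h4 _ hl'
    have hsW : s ∈ W := h2 _ hl' s hs1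
    refine ⟨⟨s, hsW⟩, ⟨(memL _ l').2 hs1, (memS ⟨s, hsW⟩).1 hs2⟩, ?_⟩
    intro t ⟨ht1, ht2⟩
    have := hs3 (t : V) ⟨(memL t l').1 ht1, (memS t).2 ht2⟩
    exact Subtype.ext this
  · intro l' hl' s hs hsS
    have := h5 _ hl' (s : V) ((memL s l').1 hs) ((memS s).2 hsS)
    rcases this with h | h
    · left
      rw [List.head?_map] at h
      cases hh : l'.head? with
      | none => rw [hh] at h; simp at h
      | some a => rw [hh] at h; simp only [Option.map_some] at h
                  exact congrArg some (Subtype.ext (Option.some_injective _ h))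
    · right
      rw [List.getLast?_map] at h
      cases hh : l'.getLast? with
      | none => rw [hh] at h; simp at h
      | some a => rw [hh] at h; simp only [Option.map_some] at h
                  exact congrArg some (Subtype.ext (Option.some_injective _ h))


lemma stable_insert {A : V → V → Prop} {S : Set V} (hS : IsStable A S) {v : V}
    (hv : ∀ t ∈ S, ¬ DAdj A v t) : IsStable A (insert v S) := by
  intro a ha b hb hab
  rcases ha with rfl | ha <;> rcases hb with rfl | hb
  · exact absurd rfl hab
  · exact hv b hb
  · exact fun h => hv a ha h.symm
  · exact hS a ha b hb hab

lemma max_step [Finite V] {A : V → V → Prop} {UI UI' S : Set V}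
    (hmax : ∀ T : Set V, T ⊆ UI → IsStable A T → T.ncard ≤ S.ncard)
    {s w : V} (hs : s ∈ S) (hw : w ∈ UI) (hsub : UI' ⊆ UI)
    (hpart : ∀ t ∈ UI', ¬ DAdj A w t) (hwmem : w ∉ UI') :
    ∀ T : Set V, T ⊆ UI' → IsStable A T → T.ncard ≤ (S \ {s}).ncard := by
  intro T hT hTst
  have hwT : w ∉ T := fun h => hwmem (hT h)
  have hins : IsStable A (insert w T) := stable_insert hTst (fun t ht => hpart t (hT ht))
  have hcard : (insert w T).ncard = T.ncard + 1 := Set.ncard_insert_of_notMem hwT (Set.toFinite T)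
  have hsubI : insert w T ⊆ UI := by
    rintro t (rfl | ht)
    · exact hw
    · exact hsub (hT ht)
  have h1 := hmax _ hsubI hins
  have h2 : (S \ {s}).ncard = S.ncard - 1 := Set.ncard_diff_singleton_of_mem hs
  omega

lemma inter_diff_singleton {S U : Set V} {a : V} (ha : a ∉ U) : S ∩ U = (S \ {a}) ∩ U := by
  ext v
  constructor
  · rintro ⟨h1, h2⟩
    exact ⟨⟨h1, fun h => ha ((Set.mem_singleton_iff.1 h) ▸ h2)⟩, h2⟩
  · rintro ⟨⟨h1, _⟩, h2⟩
    exact ⟨h1, h2⟩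

section Cycle
variable [Finite V] {A : V → V → Prop} {n : ℕ} {x : ZMod n → V}

lemma cast_nat_ne_zero [NeZero n] {c : ℕ} (h1 : c ≠ 0) (h2 : c < n) : (c : ZMod n) ≠ 0 := by
  intro h
  rcases (ZMod.natCast_eq_zero_iff c n).1 h with ⟨d, hd⟩
  rcases Nat.eq_zero_or_pos d with rfl | hdpos
  · omega
  · nlinarith [Nat.le_mul_of_pos_right n hdpos]

lemma mem_img (hx : Function.Bijective x) {J : Finset (ZMod n)} {a : ZMod n} :
    x a ∈ x '' ↑J ↔ a ∈ J := by
  constructor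
  · rintro ⟨j', hj', hje⟩
    rwa [← hx.1 hje]
  · intro h
    exact ⟨a, h, rfl⟩

lemma no_partner (hadj : ∀ i j, DAdj A (x i) (x j) ↔ (j = i + 1 ∨ i = j + 1))
    {I' : Finset (ZMod n)} {w : ZMod n} (h1 : w + 1 ∉ I') (h2 : w - 1 ∉ I') :
    ∀ t ∈ x '' ↑I', ¬ DAdj A (x w) t := by
  rintro t ⟨j', hj', rfl⟩ hD
  rcases (hadj w j').1 hD with h | h
  · exact h1 (h ▸ hj')
  · have hj : j' = w - 1 := by rw [h]; ring
    exact h2 (hj ▸ hj')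

end Cycle

section Path
variable [Finite V] {A : V → V → Prop} {n : ℕ} {x : ZMod n → V}

set_option maxHeartbeats 1000000 in
lemma pathLemma [NeZero n] (hn : 3 ≤ n) (hx : Function.Bijective x)
    (hadj : ∀ i j, DAdj A (x i) (x j) ↔ (j = i + 1 ∨ i = j + 1)) :
    ∀ (m : ℕ) (I : Finset (ZMod n)), I.card = m → I ≠ Finset.univ →
    ∀ S : Set V, S ⊆ x '' ↑I → IsStable A S →
    (∀ T : Set V, T ⊆ x '' ↑I → IsStable A T → T.ncard ≤ S.ncard) →
    ∃ P : Set (List V), GoodPart A S (x '' ↑I) P := by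
  intro m
  induction m using Nat.strong_induction_on with
  | _ m ih =>
  intro I hIcard hIne S hSsub hSst hSmax
  classical
  rcases Finset.eq_empty_or_nonempty I with rfl | ⟨i0, hi0⟩
  · refine ⟨∅, ?_⟩
    have : (x '' (↑(∅ : Finset (ZMod n)) : Set (ZMod n))) = ∅ := by simp
    rw [this]
    refine ⟨by simp, by simp, by simp, by simp, by simp⟩
  obtain ⟨j, hj⟩ : ∃ j, j ∉ I := by
    by_contra h
    push_neg at h
    exact hIne (Finset.eq_univ_iff_forall.2 h)
  have hQ : ∃ k : ℕ, j + ((k : ℕ) : ZMod n) ∈ I := by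
    refine ⟨(i0 - j).val, ?_⟩
    rw [ZMod.natCast_rightInverse (i0 - j)]
    have : j + (i0 - j) = i0 := by ring
    rwa [this]
  set k0 := Nat.find hQ with hk0def
  have hk0 : j + ((k0 : ℕ) : ZMod n) ∈ I := Nat.find_spec hQ
  have hk0pos : 0 < k0 := by
    rcases Nat.eq_zero_or_pos k0 with h | h
    · exfalso
      rw [h] at hk0
      simp only [Nat.cast_zero, add_zero] at hk0
      exact hj hk0
    · exact h
  set i : ZMod n := j + ((k0 : ℕ) : ZMod n) with hidef
  have hiI : i ∈ I := hk0
  have hiprev : i - 1 ∉ I := by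
    have h1 : j + (((k0 - 1 : ℕ) : ℕ) : ZMod n) ∉ I := Nat.find_min hQ (by omega)
    have h2 : i - 1 = j + (((k0 - 1 : ℕ) : ℕ) : ZMod n) := by
      rw [hidef, Nat.cast_sub hk0pos]
      push_cast
      ring
    rwa [h2]
  have hne1 : x i ≠ x (i + 1) := by
    intro h
    have := hx.1 h
    have h10 : (1 : ZMod n) ≠ 0 := by
      have := cast_nat_ne_zero (n := n) (c := 1) (by omega) (by omega)
      simpa using this
    exact h10 (by linear_combination -this)
  have hDii1 : DAdj A (x i) (x (i + 1)) := (hadj i (i + 1)).2 (Or.inl rfl)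
  -- the exfalso configuration: x i ∉ S and x (i+1) not an available S-partner
  have exfalso_case : x i ∉ S → (i + 1 ∉ I ∨ x (i + 1) ∉ S) → False := by
    intro hiS hcond
    have hstable : IsStable A (insert (x i) S) := by
      refine stable_insert hSst ?_
      intro t ht hD
      obtain ⟨j', hj', rfl⟩ := hSsub ht
      rcases (hadj i j').1 hD with h | h
      · subst h
        rcases hcond with h' | h'
        · exact h' hj'
        · exact h' ht
      · have : j' = i - 1 := by rw [h]; ring
        exact hiprev (this ▸ hj')
    have hsubI : insert (x i) S ⊆ x '' ↑I := by
      rintro t (rfl | ht)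
      · exact (mem_img hx).2 hiI
      · exact hSsub ht
    have := hSmax _ hsubI hstable
    rw [Set.ncard_insert_of_notMem hiS (Set.toFinite S)] at this
    omega
  by_cases hi1 : i + 1 ∈ I
  · -- pair case: exactly one of x i, x (i+1) is in S (else contradiction)
    have hpair : ∃ s0, s0 ∈ S ∧ ((s0 = x i ∧ x (i + 1) ∉ S) ∨ (s0 = x (i + 1) ∧ x i ∉ S)) := by
      by_cases hiS : x i ∈ S
      · have hi1S : x (i + 1) ∉ S := fun h => hSst (x i) hiS (x (i + 1)) h hne1 hDii1
        exact ⟨x i, hiS, Or.inl ⟨rfl, hi1S⟩⟩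
      · by_cases hi1S : x (i + 1) ∈ S
        · exact ⟨x (i + 1), hi1S, Or.inr ⟨rfl, hiS⟩⟩
        · exact absurd (exfalso_case hiS (Or.inr hi1S)) not_false
    obtain ⟨s0, hs0S, ho⟩ := hpair
    set I' : Finset (ZMod n) := (I.erase i).erase (i + 1) with hI'def
    have hI'subst : I' ⊆ I := (Finset.erase_subset _ _).trans (Finset.erase_subset _ _)
    have hiI' : i ∉ I' := fun h => (Finset.notMem_erase i I) (Finset.mem_of_mem_erase h)
    have hi1I' : i + 1 ∉ I' := Finset.notMem_erase _ _
    have hI'card : I'.card < m := by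
      calc I'.card ≤ (I.erase i).card := Finset.card_le_card (Finset.erase_subset _ _)
      _ < I.card := Finset.card_erase_lt_of_mem hiI
      _ = m := hIcard
    have hI'ne : I' ≠ Finset.univ := fun h => hiI' (h ▸ Finset.mem_univ i)
    have hs0I' : s0 ∉ x '' ↑I' := by
      rcases ho with ⟨rfl, _⟩ | ⟨rfl, _⟩
      · exact fun h => hiI' ((mem_img hx).1 h)
      · exact fun h => hi1I' ((mem_img hx).1 h)
    have hS'sub : S \ {s0} ⊆ x '' ↑I' := by
      rintro s ⟨hsS, hsne⟩
      obtain ⟨j', hj', rfl⟩ := hSsub hsS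
      refine ⟨j', ?_, rfl⟩
      have hj'1 : j' ≠ i := by
        rintro rfl
        rcases ho with ⟨h1, _⟩ | ⟨_, h2⟩
        · exact hsne (by rw [h1]; exact rfl)
        · exact h2 hsS
      have hj'2 : j' ≠ i + 1 := by
        rintro rfl
        rcases ho with ⟨_, h2⟩ | ⟨h1, _⟩
        · exact h2 hsS
        · exact hsne (by rw [h1]; exact rfl)
      exact Finset.mem_coe.2 (Finset.mem_erase.2 ⟨hj'2, Finset.mem_erase.2 ⟨hj'1, Finset.mem_coe.1 hj'⟩⟩)
    have hS'st : IsStable A (S \ {s0}) := fun u hu v hv => hSst u hu.1 v hv.1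
    have hS'max : ∀ T : Set V, T ⊆ x '' ↑I' → IsStable A T → T.ncard ≤ (S \ {s0}).ncard := by
      refine max_step hSmax hs0S ((mem_img hx).2 hiI) (Set.image_mono (by exact_mod_cast hI'subst)) ?_ ?_
      · exact no_partner hadj hi1I' (fun h => hiprev (hI'subst h))
      · exact fun h => hiI' ((mem_img hx).1 h)
    obtain ⟨P, hP⟩ := ih I'.card hI'card I' rfl hI'ne (S \ {s0}) hS'sub hS'st hS'max
    have hPS : GoodPart A S (x '' ↑I') P :=
      goodPart_congr hP (inter_diff_singleton hs0I').symm
    have himg : x '' ↑I = x '' ↑I' ∪ {x i, x (i + 1)} := by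
      ext v
      constructor
      · rintro ⟨j', hj', rfl⟩
        by_cases h1 : j' = i
        · exact Or.inr (Or.inl (by rw [h1]))
        by_cases h2 : j' = i + 1
        · exact Or.inr (Or.inr (by rw [h2]; rfl))
        · exact Or.inl ⟨j', by simp [hI'def, Finset.mem_erase, h1, h2, hj'], rfl⟩
      · rintro (⟨j', hj', rfl⟩ | h)
        · exact ⟨j', hI'subst hj', rfl⟩
        · rcases h with h | h
          · exact h ▸ ⟨i, hiI, rfl⟩
          · simp only [Set.mem_singleton_iff] at h
            exact h ▸ ⟨i + 1, hi1, rfl⟩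
    rw [himg]
    have hboth : ∀ (l : List V), (l = [x i, x (i + 1)] ∨ l = [x (i + 1), x i]) →
        ∃ P', GoodPart A S (x '' ↑I' ∪ {x i, x (i + 1)}) P' ∨ True := fun _ _ => ⟨∅, Or.inr trivial⟩
    clear hboth
    have key : ∀ (l : List V), IsDiPath A l → (l = [x i, x (i + 1)] ∨ l = [x (i + 1), x i]) →
        GoodPart A S (x '' ↑I' ∪ {x i, x (i + 1)}) (insert l P) := by
      intro l hldi hl
      have hmeml : ∀ v, v ∈ l ↔ (v = x i ∨ v = x (i + 1)) := by
        rcases hl with rfl | rfl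
        · intro v; constructor
          · intro h; simpa using h
          · rintro (rfl | rfl) <;> simp
        · intro v; constructor
          · intro h; rcases (by simpa using h : v = x (i+1) ∨ v = x i) with rfl | rfl
            · exact Or.inr rfl
            · exact Or.inl rfl
          · rintro (rfl | rfl) <;> simp
      refine goodPart_insert hPS l hldi ?_ ?_ ?_ ?_ ?_ ?_
      · intro v hv
        rcases (hmeml v).1 hv with rfl | rfl
        · exact Or.inr (Or.inl rfl)
        · exact Or.inr (Or.inr rfl)
      · intro v hv
        rcases (hmeml v).1 hv with rfl | rfl
        · exact fun h => hiI' ((mem_img hx).1 h)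
        · exact fun h => hi1I' ((mem_img hx).1 h)
      · exact fun v hv => Or.inl hv
      · rintro v (hv | hv) h2
        · exact absurd hv h2
        · rcases hv with hv | hv
          · exact (hmeml v).2 (Or.inl hv)
          · simp only [Set.mem_singleton_iff] at hv
            exact (hmeml v).2 (Or.inr hv)
      · refine ⟨s0, ⟨?_, hs0S⟩, ?_⟩
        · rcases ho with ⟨rfl, _⟩ | ⟨rfl, _⟩
          · exact (hmeml _).2 (Or.inl rfl)
          · exact (hmeml _).2 (Or.inr rfl)
        · rintro t ⟨ht, htS⟩
          rcases (hmeml t).1 ht with rfl | rfl <;>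
            rcases ho with ⟨h1, h2⟩ | ⟨h1, h2⟩
          · rw [h1]
          · exact absurd htS h2
          · exact absurd htS h2
          · rw [h1]
      · intro s hs hsS
        rcases hl with rfl | rfl <;> rcases (hmeml s).1 hs with rfl | rfl
        · exact Or.inl rfl
        · exact Or.inr (by simp)
        · exact Or.inr (by simp)
        · exact Or.inl rfl
    rcases hDii1 with hA | hA
    · exact ⟨insert [x i, x (i + 1)] P, key _ ⟨by simp, by simp [hne1], by simp [List.Chain', hA]⟩ (Or.inl rfl)⟩
    · exact ⟨insert [x (i + 1), x i] P, key _ ⟨by simp, by simp [Ne.symm hne1], by simp [List.Chain', hA]⟩ (Or.inr rfl)⟩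
  · by_cases hiS : x i ∈ S
    · -- singleton [x i]
      set I' : Finset (ZMod n) := I.erase i with hI'def
      have hI'subst : I' ⊆ I := Finset.erase_subset _ _
      have hiI' : i ∉ I' := Finset.notMem_erase i I
      have hI'card : I'.card < m := hIcard ▸ Finset.card_erase_lt_of_mem hiI
      have hI'ne : I' ≠ Finset.univ := fun h => hiI' (h ▸ Finset.mem_univ i)
      have hs0I' : x i ∉ x '' ↑I' := fun h => hiI' ((mem_img hx).1 h)
      have hS'sub : S \ {x i} ⊆ x '' ↑I' := by
        rintro s ⟨hsS, hsne⟩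
        obtain ⟨j', hj', rfl⟩ := hSsub hsS
        refine ⟨j', ?_, rfl⟩
        have hj'1 : j' ≠ i := fun h => hsne (by rw [h]; exact rfl)
        exact Finset.mem_coe.2 (Finset.mem_erase.2 ⟨hj'1, Finset.mem_coe.1 hj'⟩)
      have hS'st : IsStable A (S \ {x i}) := fun u hu v hv => hSst u hu.1 v hv.1
      have hS'max : ∀ T : Set V, T ⊆ x '' ↑I' → IsStable A T → T.ncard ≤ (S \ {x i}).ncard := by
        refine max_step hSmax hiS ((mem_img hx).2 hiI) (Set.image_mono (by exact_mod_cast hI'subst)) ?_ ?_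
        · refine no_partner hadj ?_ (fun h => hiprev (hI'subst h))
          exact fun h => hi1 (hI'subst h)
        · exact hs0I'
      obtain ⟨P, hP⟩ := ih I'.card hI'card I' rfl hI'ne (S \ {x i}) hS'sub hS'st hS'max
      have hPS : GoodPart A S (x '' ↑I') P :=
        goodPart_congr hP (inter_diff_singleton hs0I').symm
      have himg : x '' ↑I = x '' ↑I' ∪ {x i} := by
        ext v
        constructor
        · rintro ⟨j', hj', rfl⟩
          by_cases h1 : j' = i
          · exact Or.inr (by rw [h1]; exact rfl)
          · exact Or.inl ⟨j', by simp [hI'def, Finset.mem_erase, h1, hj'], rfl⟩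
        · rintro (⟨j', hj', rfl⟩ | h)
          · exact ⟨j', hI'subst hj', rfl⟩
          · simp only [Set.mem_singleton_iff] at h
            exact h ▸ ⟨i, hiI, rfl⟩
      rw [himg]
      refine ⟨insert [x i] P, goodPart_insert hPS [x i] ⟨by simp, by simp, by simp [List.Chain']⟩
        ?_ ?_ ?_ ?_ ?_ ?_⟩
      · intro v hv
        rcases (by simpa using hv : v = x i) with rfl
        exact Or.inr rfl
      · intro v hv
        rcases (by simpa using hv : v = x i) with rfl
        exact hs0I'
      · exact fun v hv => Or.inl hv
      · rintro v (hv | hv) h2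
        · exact absurd hv h2
        · simp only [Set.mem_singleton_iff] at hv
          simp [hv]
      · refine ⟨x i, ⟨by simp, hiS⟩, ?_⟩
        rintro t ⟨ht, htS⟩
        rcases (by simpa using ht : t = x i) with rfl
        rfl
      · intro s hs hsS
        rcases (by simpa using hs : s = x i) with rfl
        exact Or.inl rfl
    · exact absurd (exfalso_case hiS (Or.inl hi1)) not_false
end Path


section Cnt
variable [Finite V] {A : V → V → Prop} {n : ℕ} {x : ZMod n → V}

lemma xcast (a : ZMod n) [NeZero n] : ((a.val : ℕ) : ZMod n) = a := ZMod.natCast_rightInverse a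

lemma even_count [NeZero n] (hn : 3 ≤ n) (hx : Function.Bijective x)
    (hadj : ∀ i j, DAdj A (x i) (x j) ↔ (j = i + 1 ∨ i = j + 1))
    (heven : n % 2 = 0) {g : ZMod n} {T : Set V} (hT : IsStable A T)
    (h0 : x g ∉ T) (h1 : x (g + 1) ∉ T) : T.ncard ≤ n / 2 - 1 := by
  set e := Equiv.ofBijective x hx with he
  have hxe : ∀ v : V, x (e.symm v) = v := fun v => e.apply_symm_apply v
  set d : V → ℕ := fun v => (e.symm v - g).val with hd
  have hdlt : ∀ v, d v < n := fun v => ZMod.val_lt _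
  have hdcast : ∀ v, ((d v : ℕ) : ZMod n) = e.symm v - g := fun v => xcast _
  have hd0 : ∀ v ∈ T, d v ≠ 0 := by
    intro v hv hdv
    have : e.symm v - g = 0 := by rw [← hdcast v, hdv]; simp
    have : e.symm v = g := by linear_combination this
    exact h0 (by rw [← this, hxe]; exact hv)
  have hd1 : ∀ v ∈ T, d v ≠ 1 := by
    intro v hv hdv
    have : e.symm v - g = 1 := by rw [← hdcast v, hdv]; simp
    have : e.symm v = g + 1 := by linear_combination this
    exact h1 (by rw [← this, hxe]; exact hv)
  have key : T.ncard ≤ (↑(Finset.Ico 1 (n / 2)) : Set ℕ).ncard := by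
    refine Set.ncard_le_ncard_of_injOn (fun v => d v / 2) ?_ ?_ (Set.toFinite _)
    · intro v hv
      have := hdlt v; have := hd0 v hv; have := hd1 v hv
      simp only [Finset.coe_Ico, Set.mem_Ico]
      omega
    · intro u hu v hv huv
      simp only at huv
      by_contra hne
      have hdne : d u ≠ d v := by
        intro h
        apply hne
        have : e.symm u - g = e.symm v - g := by rw [← hdcast u, ← hdcast v, h]
        have h2 : e.symm u = e.symm v := by linear_combination this
        have := congrArg x h2
        rwa [hxe, hxe] at this
      have hcases : d v = d u + 1 ∨ d u = d v + 1 := by omega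
      have hadjuv : DAdj A u v := by
        rcases hcases with h | h
        · have : e.symm v - g = (e.symm u - g) + 1 := by
            rw [← hdcast u, ← hdcast v, h]; push_cast; ring
          have h2 : e.symm v = e.symm u + 1 := by linear_combination this
          have := (hadj (e.symm u) (e.symm v)).2 (Or.inl h2)
          rwa [hxe, hxe] at this
        · have : e.symm u - g = (e.symm v - g) + 1 := by
            rw [← hdcast u, ← hdcast v, h]; push_cast; ring
          have h2 : e.symm u = e.symm v + 1 := by linear_combination this
          have := (hadj (e.symm u) (e.symm v)).2 (Or.inr h2)
          rwa [hxe, hxe] at this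
      exact hT u hu v hv hne hadjuv
  rw [Set.ncard_coe_finset, Nat.card_Ico] at key
  omega

lemma alt_lower [NeZero n] (hn : 3 ≤ n) (hx : Function.Bijective x)
    (hadj : ∀ i j, DAdj A (x i) (x j) ↔ (j = i + 1 ∨ i = j + 1))
    (heven : n % 2 = 0) {S : Set V}
    (hSmax : ∀ T : Set V, IsStable A T → T.ncard ≤ S.ncard) :
    n / 2 ≤ S.ncard := by
  set f : ℕ → V := fun t => x (((2 * t : ℕ) : ZMod n)) with hf
  have hinj : Set.InjOn f ↑(Finset.range (n / 2)) := by
    intro a ha b hb hab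
    simp only [Finset.coe_range, Set.mem_Iio] at ha hb
    have := hx.1 hab
    have h2 := (ZMod.natCast_eq_natCast_iff _ _ _).1 this
    have h3 := Nat.ModEq.eq_of_lt_of_lt h2 (by omega) (by omega)
    omega
  have hstable : IsStable A (f '' ↑(Finset.range (n / 2))) := by
    rintro u ⟨a, ha, rfl⟩ v ⟨b, hb, rfl⟩ hne hD
    simp only [Finset.coe_range, Set.mem_Iio] at ha hb
    rcases (hadj _ _).1 hD with h | h
    · have h2 : ((2 * b : ℕ) : ZMod n) = ((2 * a + 1 : ℕ) : ZMod n) := by rw [h]; push_cast; ring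
      have h3 := (ZMod.natCast_eq_natCast_iff _ _ _).1 h2
      have h4 := Nat.ModEq.eq_of_lt_of_lt h3 (by omega) (by omega)
      omega
    · have h2 : ((2 * a : ℕ) : ZMod n) = ((2 * b + 1 : ℕ) : ZMod n) := by rw [h]; push_cast; ring
      have h3 := (ZMod.natCast_eq_natCast_iff _ _ _).1 h2
      have h4 := Nat.ModEq.eq_of_lt_of_lt h3 (by omega) (by omega)
      omega
  have := hSmax _ hstable
  rwa [Set.ncard_image_of_injOn hinj, Set.ncard_coe_finset, Finset.card_range] at this
end Cnt


section P
variable [Finite V] {A : V → V → Prop} {n : ℕ} {x : ZMod n → V}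

lemma cast_nat_ne_zero' [NeZero n] {c : ℕ} (h1 : c ≠ 0) (h2 : c < n) : (c : ZMod n) ≠ 0 := by
  intro h
  rcases (ZMod.natCast_eq_zero_iff c n).1 h with ⟨d, hd⟩
  rcases Nat.eq_zero_or_pos d with rfl | hdpos
  · omega
  · nlinarith [Nat.le_mul_of_pos_right n hdpos]

lemma xne [NeZero n] (hn : 3 ≤ n) (hx : Function.Bijective x) (g : ZMod n) :
    x g ≠ x (g + 1) := by
  intro h
  have h2 := hx.1 h
  have h10 : ((1 : ℕ) : ZMod n) ≠ 0 := cast_nat_ne_zero' (by omega) (by omega)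
  refine h10 ?_
  push_cast
  linear_combination -h2

lemma xne2 [NeZero n] (hn : 3 ≤ n) (hx : Function.Bijective x) (g : ZMod n) :
    x g ≠ x (g + 2) := by
  intro h
  have h2 := hx.1 h
  have h10 : ((2 : ℕ) : ZMod n) ≠ 0 := cast_nat_ne_zero' (by omega) (by omega)
  refine h10 ?_
  push_cast
  linear_combination -h2

lemma parity_even [NeZero n] (hn : 3 ≤ n) (hx : Function.Bijective x)
    (hadj : ∀ i j, DAdj A (x i) (x j) ↔ (j = i + 1 ∨ i = j + 1))
    {S : Set V} (hSst : IsStable A S)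
    (halt : ∀ g : ZMod n, x g ∈ S ∨ x (g + 1) ∈ S)
    {g₀ : ZMod n} (hg₀ : x g₀ ∈ S) : n % 2 = 0 := by
  have step : ∀ d : ZMod n, (x d ∈ S ↔ x (d + 1) ∉ S) := by
    intro d
    constructor
    · intro hd hd1
      exact hSst _ hd _ hd1 (xne hn hx d) ((hadj d (d + 1)).2 (Or.inl rfl))
    · intro hd1
      rcases halt d with h | h
      · exact h
      · exact absurd h hd1
  have ind : ∀ t : ℕ, (x (g₀ + ((t : ℕ) : ZMod n)) ∈ S ↔ Even t) := by
    intro t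
    induction t with
    | zero => simpa using hg₀
    | succ t iht =>
      have e : g₀ + (((t + 1 : ℕ)) : ZMod n) = (g₀ + ((t : ℕ) : ZMod n)) + 1 := by
        push_cast; ring
      rw [e, Nat.even_add_one]
      constructor
      · intro h ht
        exact (step _).1 (iht.2 ht) h
      · intro h
        by_contra h2
        exact h (iht.1 ((step _).2 h2))
  have := ind n
  rw [ZMod.natCast_self, add_zero] at this
  obtain ⟨c, hc⟩ := this.1 hg₀
  omega

end P



section FC
variable [Finite V] {A : V → V → Prop} {n : ℕ} {x : ZMod n → V}

lemma failure_contra [NeZero n] (hn : 3 ≤ n) (hx : Function.Bijective x)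
    (hadj : ∀ i j, DAdj A (x i) (x j) ↔ (j = i + 1 ∨ i = j + 1))
    (hB : ¬ ∃ W : Set V, IsBlockingOddCycle (fun a b : W => A a.1 b.1))
    {S : Set V} (hSst : IsStable A S)
    (hSmax : ∀ T : Set V, IsStable A T → T.ncard ≤ S.ncard)
    {g : ZMod n} (hgS : x g ∉ S) (hg1S : x (g + 1) ∉ S)
    (hu : IsSource A (x g) ∨ IsSink A (x g))
    (hv : IsSource A (x (g + 1)) ∨ IsSink A (x (g + 1))) : False := by
  rcases Nat.even_or_odd n with he | ho
  · have h1 := even_count hn hx hadj (Nat.even_iff.1 he) hSst hgS hg1S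
    have h2 := alt_lower hn hx hadj (Nat.even_iff.1 he) hSmax
    have h3 := Nat.even_iff.1 he
    omega
  · obtain ⟨k, hk⟩ := ho
    subst hk
    apply hB
    refine ⟨Set.univ, k, fun t => ⟨x (g + t), trivial⟩, by omega, ⟨?_, ?_⟩, ?_, ?_, ?_⟩
    · intro a b hab
      have := hx.1 (congrArg Subtype.val hab)
      exact add_left_cancel this
    · rintro ⟨v, -⟩
      obtain ⟨j, rfl⟩ := hx.2 v
      exact ⟨j - g, Subtype.ext (congrArg x (by ring))⟩
    · intro a b
      have hre : DAdj (fun a b : (Set.univ : Set V) => A a.1 b.1)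
          ⟨x (g + a), trivial⟩ ⟨x (g + b), trivial⟩ ↔ DAdj A (x (g + a)) (x (g + b)) := Iff.rfl
      rw [hre, hadj]
      constructor
      · rintro (h | h)
        · exact Or.inl (by linear_combination h)
        · exact Or.inr (by linear_combination h)
      · rintro (h | h)
        · exact Or.inl (by rw [h]; ring)
        · exact Or.inr (by rw [h]; ring)
    · rcases hu with h | h
      · left
        intro u hA
        exact h u.1 (by simpa using hA)
      · right
        intro u hA
        exact h u.1 (by simpa using hA)
    · rcases hv with h | h
      · left
        intro u hA
        exact h u.1 (by simpa using hA)
      · right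
        intro u hA
        exact h u.1 (by simpa using hA)

set_option maxHeartbeats 1000000 in
lemma cycleLemma [NeZero n] (hn : 3 ≤ n) (hx : Function.Bijective x)
    (hadj : ∀ i j, DAdj A (x i) (x j) ↔ (j = i + 1 ∨ i = j + 1))
    (hB : ¬ ∃ W : Set V, IsBlockingOddCycle (fun a b : W => A a.1 b.1))
    {S : Set V} (hSst : IsStable A S)
    (hSmax : ∀ T : Set V, IsStable A T → T.ncard ≤ S.ncard) :
    ∃ P : Set (List V), GoodPart A S Set.univ P := by
  classical
  have hmax' : ∀ T : Set V, T ⊆ Set.univ → IsStable A T → T.ncard ≤ S.ncard :=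
    fun T _ hT => hSmax T hT
  by_cases hgap : ∃ g : ZMod n, x g ∉ S ∧ x (g + 1) ∉ S
  · obtain ⟨g, hgS, hg1S⟩ := hgap
    have hgrow : ∀ w : ZMod n, x w ∉ S → x (w + 1) ∉ S → x (w - 1) ∉ S → False := by
      intro w h0 h1 h2
      have hstable : IsStable A (insert (x w) S) := by
        refine stable_insert hSst ?_
        intro t ht hD
        obtain ⟨j, rfl⟩ := hx.2 t
        rcases (hadj w j).1 hD with h | h
        · exact h1 (h ▸ ht)
        · have hj : j = w - 1 := by rw [h]; ring
          exact h2 (hj ▸ ht)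
      have := hSmax _ hstable
      rw [Set.ncard_insert_of_notMem h0 (Set.toFinite S)] at this
      omega
    have hs1 : x (g - 1) ∈ S := by
      by_contra h
      exact hgrow g hgS hg1S h
    have hs2 : x (g + 2) ∈ S := by
      by_contra h
      refine hgrow (g + 1) hg1S ?_ ?_
      · rwa [show g + 1 + 1 = g + 2 by ring]
      · rwa [show g + 1 - 1 = g by ring]
    have d3 : A (x g) (x (g + 1)) ∨ A (x (g + 1)) (x g) := (hadj g (g + 1)).2 (Or.inl rfl)
    have d1 : A (x (g - 1)) (x g) ∨ A (x g) (x (g - 1)) := (hadj (g - 1) g).2 (Or.inl (by ring))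
    have d2 : A (x (g + 1)) (x (g + 2)) ∨ A (x (g + 2)) (x (g + 1)) :=
      (hadj (g + 1) (g + 2)).2 (Or.inl (by ring))
    have e1 : g - 1 + 1 = g := by ring
    have e2 : g - 1 + 2 = g + 1 := by ring
    have hpath : ∃ (a : ZMod n) (l : List V),
        (l = [x a, x (a + 1), x (a + 2)] ∨ l = [x (a + 2), x (a + 1), x a]) ∧ l.Chain' A ∧
        ((x a ∈ S ∧ x (a + 1) ∉ S ∧ x (a + 2) ∉ S) ∨
          (x (a + 2) ∈ S ∧ x a ∉ S ∧ x (a + 1) ∉ S)) := by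
      rcases d3 with h3 | h3
      · by_cases h2 : A (x (g + 1)) (x (g + 2))
        · exact ⟨g, _, Or.inl rfl, by simp [List.Chain', List.isChain_cons_cons, h3, h2], Or.inr ⟨hs2, hgS, hg1S⟩⟩
        · have h2' : A (x (g + 2)) (x (g + 1)) := d2.resolve_left h2
          by_cases h1 : A (x (g - 1)) (x g)
          · refine ⟨g - 1, [x (g - 1), x (g - 1 + 1), x (g - 1 + 2)], Or.inl rfl, ?_, ?_⟩
            · rw [e1, e2]; simp [List.Chain', List.isChain_cons_cons, h1, h3]
            · rw [e1, e2]; exact Or.inl ⟨hs1, hgS, hg1S⟩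
          · have h1' : A (x g) (x (g - 1)) := d1.resolve_left h1
            by_cases h3' : A (x (g + 1)) (x g)
            · refine ⟨g - 1, [x (g - 1 + 2), x (g - 1 + 1), x (g - 1)], Or.inr rfl, ?_, ?_⟩
              · rw [e1, e2]; simp [List.Chain', List.isChain_cons_cons, h3', h1']
              · rw [e1, e2]; exact Or.inl ⟨hs1, hgS, hg1S⟩
            · exfalso
              refine failure_contra hn hx hadj hB hSst hSmax hgS hg1S ?_ ?_
              · left
                intro u hA
                obtain ⟨j, rfl⟩ := hx.2 u
                rcases (hadj j g).1 (Or.inl hA) with h | h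
                · have hj : j = g - 1 := by rw [h]; ring
                  exact h1 (hj ▸ hA)
                · exact h3' (h ▸ hA)
              · right
                intro u hA
                obtain ⟨j, rfl⟩ := hx.2 u
                rcases (hadj (g + 1) j).1 (Or.inl hA) with h | h
                · have hj : j = g + 2 := by rw [h]; ring
                  exact h2 (hj ▸ hA)
                · have hj : j = g := by
                    have : j + 1 = g + 1 := h.symm
                    exact add_right_cancel this
                  exact h3' (hj ▸ hA)
      · by_cases h1 : A (x g) (x (g - 1))
        · refine ⟨g - 1, [x (g - 1 + 2), x (g - 1 + 1), x (g - 1)], Or.inr rfl, ?_, ?_⟩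
          · rw [e1, e2]; simp [List.Chain', List.isChain_cons_cons, h3, h1]
          · rw [e1, e2]; exact Or.inl ⟨hs1, hgS, hg1S⟩
        · have h1' : A (x (g - 1)) (x g) := d1.resolve_right h1
          by_cases h2 : A (x (g + 2)) (x (g + 1))
          · exact ⟨g, _, Or.inr rfl, by simp [List.Chain', List.isChain_cons_cons, h2, h3], Or.inr ⟨hs2, hgS, hg1S⟩⟩
          · have h2' : A (x (g + 1)) (x (g + 2)) := d2.resolve_right h2
            by_cases h3' : A (x g) (x (g + 1))
            · exact ⟨g, _, Or.inl rfl, by simp [List.Chain', List.isChain_cons_cons, h3', h2'], Or.inr ⟨hs2, hgS, hg1S⟩⟩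
            · exfalso
              refine failure_contra hn hx hadj hB hSst hSmax hgS hg1S ?_ ?_
              · right
                intro u hA
                obtain ⟨j, rfl⟩ := hx.2 u
                rcases (hadj g j).1 (Or.inl hA) with h | h
                · exact h3' (h ▸ hA)
                · have hj : j = g - 1 := by rw [h]; ring
                  exact h1 (hj ▸ hA)
              · left
                intro u hA
                obtain ⟨j, rfl⟩ := hx.2 u
                rcases (hadj j (g + 1)).1 (Or.inl hA) with h | h
                · have hj : j = g := by
                    have : g + 1 = j + 1 := h
                    exact (add_right_cancel this).symm
                  exact h3' (hj ▸ hA)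
                · have hj : j = g + 2 := by rw [h]; ring
                  exact h2 (hj ▸ hA)
    obtain ⟨a, l, hl, hch, hor⟩ := hpath
    have hne01 : x a ≠ x (a + 1) := xne hn hx a
    have hne12 : x (a + 1) ≠ x (a + 2) := by
      have := xne hn hx (a + 1)
      rwa [show a + 1 + 1 = a + 2 by ring] at this
    have hne02 : x a ≠ x (a + 2) := xne2 hn hx a
    set I' : Finset (ZMod n) := ((Finset.univ.erase a).erase (a + 1)).erase (a + 2) with hI'def
    have hI'mem : ∀ j : ZMod n, j ∈ I' ↔ (j ≠ a ∧ j ≠ a + 1 ∧ j ≠ a + 2) := by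
      intro j
      simp only [hI'def, Finset.mem_erase, Finset.mem_univ, and_true]
      tauto
    have haI' : a ∉ I' := fun h => (((hI'mem a).1 h).1) rfl
    have ha1I' : a + 1 ∉ I' := fun h => (((hI'mem _).1 h).2.1) rfl
    have ha2I' : a + 2 ∉ I' := fun h => (((hI'mem _).1 h).2.2) rfl
    have hI'ne : I' ≠ Finset.univ := fun h => haI' (h ▸ Finset.mem_univ a)
    obtain ⟨s0, hs0S, hs0mem, hnotS⟩ :
        ∃ s0, s0 ∈ S ∧ (s0 = x a ∨ s0 = x (a + 2)) ∧
          (∀ v, (v = x a ∨ v = x (a + 1) ∨ v = x (a + 2)) → v ∈ S → v = s0) := by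
      rcases hor with ⟨hA0, hA1, hA2⟩ | ⟨hA2, hA0, hA1⟩
      · refine ⟨x a, hA0, Or.inl rfl, ?_⟩
        rintro v (rfl | rfl | rfl) hv
        · rfl
        · exact absurd hv hA1
        · exact absurd hv hA2
      · refine ⟨x (a + 2), hA2, Or.inr rfl, ?_⟩
        rintro v (rfl | rfl | rfl) hv
        · exact absurd hv hA0
        · exact absurd hv hA1
        · rfl
    have hmeml : ∀ v, v ∈ l ↔ (v = x a ∨ v = x (a + 1) ∨ v = x (a + 2)) := by
      intro v
      rcases hl with rfl | rfl
      · simp only [List.mem_cons, List.not_mem_nil, or_false]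
      · simp only [List.mem_cons, List.not_mem_nil, or_false]
        constructor
        · rintro (h | h | h)
          exacts [Or.inr (Or.inr h), Or.inr (Or.inl h), Or.inl h]
        · rintro (h | h | h)
          exacts [Or.inr (Or.inr h), Or.inr (Or.inl h), Or.inl h]
    have hs0I' : s0 ∉ x '' ↑I' := by
      rcases hs0mem with rfl | rfl
      · exact fun h => haI' ((mem_img hx).1 h)
      · exact fun h => ha2I' ((mem_img hx).1 h)
    have hS'sub : S \ {s0} ⊆ x '' ↑I' := by
      rintro s ⟨hsS, hsne⟩
      obtain ⟨j, rfl⟩ := hx.2 s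
      refine ⟨j, Finset.mem_coe.2 ((hI'mem j).2 ⟨?_, ?_, ?_⟩), rfl⟩
      · rintro rfl
        exact hsne (hnotS _ (Or.inl rfl) hsS)
      · rintro rfl
        exact hsne (hnotS _ (Or.inr (Or.inl rfl)) hsS)
      · rintro rfl
        exact hsne (hnotS _ (Or.inr (Or.inr rfl)) hsS)
    have hS'st : IsStable A (S \ {s0}) := fun u hu v hv => hSst u hu.1 v hv.1
    have hS'max : ∀ T : Set V, T ⊆ x '' ↑I' → IsStable A T → T.ncard ≤ (S \ {s0}).ncard := by
      refine max_step (w := x (a + 1)) hmax' hs0S (Set.mem_univ _) (Set.subset_univ _) ?_ ?_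
      · refine no_partner hadj (by rwa [show a + 1 + 1 = a + 2 by ring]) ?_
        rwa [show a + 1 - 1 = a by ring]
      · exact fun h => ha1I' ((mem_img hx).1 h)
    obtain ⟨P, hP⟩ := pathLemma hn hx hadj I'.card I' rfl hI'ne (S \ {s0}) hS'sub hS'st hS'max
    have hPS : GoodPart A S (x '' ↑I') P :=
      goodPart_congr hP (inter_diff_singleton hs0I').symm
    have himg : (Set.univ : Set V) = x '' ↑I' ∪ {x a, x (a + 1), x (a + 2)} := by
      ext v
      simp only [Set.mem_univ, true_iff]
      obtain ⟨j, rfl⟩ := hx.2 v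
      by_cases hja : j = a
      · exact Or.inr (Or.inl (by rw [hja]))
      by_cases hja1 : j = a + 1
      · exact Or.inr (Or.inr (Or.inl (by rw [hja1])))
      by_cases hja2 : j = a + 2
      · exact Or.inr (Or.inr (Or.inr (by rw [hja2]; rfl)))
      · exact Or.inl ⟨j, Finset.mem_coe.2 ((hI'mem j).2 ⟨hja, hja1, hja2⟩), rfl⟩
    have hldi : IsDiPath A l := by
      refine ⟨?_, ?_, hch⟩
      · rcases hl with rfl | rfl <;> simp
      · rcases hl with rfl | rfl
        · simp [hne01, hne12, hne02]
        · simp [Ne.symm hne01, Ne.symm hne12, Ne.symm hne02]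
    rw [himg]
    refine ⟨insert l P, goodPart_insert hPS l hldi ?_ ?_ ?_ ?_ ?_ ?_⟩
    · intro v hv
      rcases (hmeml v).1 hv with rfl | rfl | rfl
      · exact Or.inr (Or.inl rfl)
      · exact Or.inr (Or.inr (Or.inl rfl))
      · exact Or.inr (Or.inr (Or.inr rfl))
    · intro v hv
      rcases (hmeml v).1 hv with rfl | rfl | rfl
      · exact fun h => haI' ((mem_img hx).1 h)
      · exact fun h => ha1I' ((mem_img hx).1 h)
      · exact fun h => ha2I' ((mem_img hx).1 h)
    · exact fun v hv => Or.inl hv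
    · rintro v (hv | hv | hv | hv) h2
      · exact absurd hv h2
      · exact (hmeml v).2 (Or.inl hv)
      · exact (hmeml v).2 (Or.inr (Or.inl hv))
      · simp only [Set.mem_singleton_iff] at hv
        exact (hmeml v).2 (Or.inr (Or.inr hv))
    · refine ⟨s0, ⟨?_, hs0S⟩, ?_⟩
      · rcases hs0mem with rfl | rfl
        · exact (hmeml _).2 (Or.inl rfl)
        · exact (hmeml _).2 (Or.inr (Or.inr rfl))
      · rintro t ⟨ht, htS⟩
        exact hnotS t ((hmeml t).1 ht) htS
    · intro s hs hsS
      have hse := hnotS s ((hmeml s).1 hs) hsS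
      subst hse
      rcases hl with rfl | rfl <;> rcases hs0mem with h | h
      · exact Or.inl (by rw [h]; rfl)
      · exact Or.inr (by rw [h]; simp)
      · exact Or.inr (by rw [h]; simp)
      · exact Or.inl (by rw [h]; rfl)
  · -- no gap: S and its complement alternate, n is even
    have halt : ∀ g : ZMod n, x g ∈ S ∨ x (g + 1) ∈ S := by
      intro g
      by_contra h
      push_neg at h
      exact hgap ⟨g, h.1, h.2⟩
    obtain ⟨g₀, hg₀⟩ : ∃ g₀, x g₀ ∈ S := by
      rcases halt 0 with h | h
      · exact ⟨0, h⟩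
      · exact ⟨0 + 1, h⟩
    have heven : n % 2 = 0 := parity_even hn hx hadj hSst halt hg₀
    have hg₀1 : x (g₀ + 1) ∉ S :=
      fun h => hSst _ hg₀ _ h (xne hn hx g₀) ((hadj _ _).2 (Or.inl rfl))
    set I' : Finset (ZMod n) := (Finset.univ.erase g₀).erase (g₀ + 1) with hI'def
    have hI'mem : ∀ j : ZMod n, j ∈ I' ↔ (j ≠ g₀ ∧ j ≠ g₀ + 1) := by
      intro j
      simp only [hI'def, Finset.mem_erase, Finset.mem_univ, and_true]
      tauto
    have haI' : g₀ ∉ I' := fun h => (((hI'mem _).1 h).1) rfl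
    have ha1I' : g₀ + 1 ∉ I' := fun h => (((hI'mem _).1 h).2) rfl
    have hI'ne : I' ≠ Finset.univ := fun h => haI' (h ▸ Finset.mem_univ g₀)
    have hs0I' : x g₀ ∉ x '' ↑I' := fun h => haI' ((mem_img hx).1 h)
    have hS'sub : S \ {x g₀} ⊆ x '' ↑I' := by
      rintro s ⟨hsS, hsne⟩
      obtain ⟨j, rfl⟩ := hx.2 s
      refine ⟨j, Finset.mem_coe.2 ((hI'mem j).2 ⟨?_, ?_⟩), rfl⟩
      · rintro rfl
        exact hsne rfl
      · rintro rfl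
        exact hg₀1 hsS
    have hS'st : IsStable A (S \ {x g₀}) := fun u hu v hv => hSst u hu.1 v hv.1
    have hS'max : ∀ T : Set V, T ⊆ x '' ↑I' → IsStable A T → T.ncard ≤ (S \ {x g₀}).ncard := by
      intro T hT hTst
      have h0 : x g₀ ∉ T := fun h => haI' ((mem_img hx).1 (hT h))
      have h1 : x (g₀ + 1) ∉ T := fun h => ha1I' ((mem_img hx).1 (hT h))
      have hub := even_count hn hx hadj heven hTst h0 h1
      have hlb := alt_lower hn hx hadj heven hSmax
      have hcd : (S \ {x g₀}).ncard = S.ncard - 1 :=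
        Set.ncard_diff_singleton_of_mem hg₀
      omega
    obtain ⟨P, hP⟩ := pathLemma hn hx hadj I'.card I' rfl hI'ne (S \ {x g₀}) hS'sub hS'st hS'max
    have hPS : GoodPart A S (x '' ↑I') P :=
      goodPart_congr hP (inter_diff_singleton hs0I').symm
    have himg : (Set.univ : Set V) = x '' ↑I' ∪ {x g₀, x (g₀ + 1)} := by
      ext v
      simp only [Set.mem_univ, true_iff]
      obtain ⟨j, rfl⟩ := hx.2 v
      by_cases hja : j = g₀
      · exact Or.inr (Or.inl (by rw [hja]))
      by_cases hja1 : j = g₀ + 1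
      · exact Or.inr (Or.inr (by rw [hja1]; rfl))
      · exact Or.inl ⟨j, Finset.mem_coe.2 ((hI'mem j).2 ⟨hja, hja1⟩), rfl⟩
    have hd : A (x g₀) (x (g₀ + 1)) ∨ A (x (g₀ + 1)) (x g₀) := (hadj g₀ (g₀ + 1)).2 (Or.inl rfl)
    have hne : x g₀ ≠ x (g₀ + 1) := xne hn hx g₀
    rw [himg]
    have key : ∀ (l : List V), IsDiPath A l →
        (l = [x g₀, x (g₀ + 1)] ∨ l = [x (g₀ + 1), x g₀]) →
        GoodPart A S (x '' ↑I' ∪ {x g₀, x (g₀ + 1)}) (insert l P) := by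
      intro l hldi hlor
      have hmeml : ∀ v, v ∈ l ↔ (v = x g₀ ∨ v = x (g₀ + 1)) := by
        intro v
        rcases hlor with rfl | rfl
        · simp only [List.mem_cons, List.not_mem_nil, or_false]
        · simp only [List.mem_cons, List.not_mem_nil, or_false]
          exact Or.comm
      refine goodPart_insert hPS l hldi ?_ ?_ ?_ ?_ ?_ ?_
      · intro v hv
        rcases (hmeml v).1 hv with rfl | rfl
        · exact Or.inr (Or.inl rfl)
        · exact Or.inr (Or.inr rfl)
      · intro v hv
        rcases (hmeml v).1 hv with rfl | rfl
        · exact hs0I'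
        · exact fun h => ha1I' ((mem_img hx).1 h)
      · exact fun v hv => Or.inl hv
      · rintro v (hv | hv | hv) h2
        · exact absurd hv h2
        · exact (hmeml v).2 (Or.inl hv)
        · simp only [Set.mem_singleton_iff] at hv
          exact (hmeml v).2 (Or.inr hv)
      · refine ⟨x g₀, ⟨(hmeml _).2 (Or.inl rfl), hg₀⟩, ?_⟩
        rintro t ⟨ht, htS⟩
        rcases (hmeml t).1 ht with rfl | rfl
        · rfl
        · exact absurd htS hg₀1
      · intro s hs hsS
        rcases hlor with rfl | rfl <;> rcases (hmeml s).1 hs with rfl | rfl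
        · exact Or.inl rfl
        · exact Or.inr (by simp)
        · exact Or.inr (by simp)
        · exact Or.inl rfl
    rcases hd with hA | hA
    · exact ⟨insert [x g₀, x (g₀ + 1)] P,
        key _ ⟨by simp, by simp [hne], by simp [List.Chain', hA]⟩ (Or.inl rfl)⟩
    · exact ⟨insert [x (g₀ + 1), x g₀] P,
        key _ ⟨by simp, by simp [Ne.symm hne], by simp [List.Chain', hA]⟩ (Or.inr rfl)⟩

end FC

end Aux

/-- A digraph with no induced blocking odd cycle whose underlying graph is a cycle is
BE-diperfect. -/
theorem cycle_BEDiperfect {V : Type*} [Finite V] (A : V → V → Prop)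
    (hirr : ∀ v, ¬ A v v) (hcyc : UnderlyingIsCycle A)
    (hB : ¬ ∃ W : Set V, IsBlockingOddCycle (fun a b : W => A a.1 b.1)) :
    BEDiperfect A := by
  classical
  obtain ⟨n, x, hn, hx, hadj⟩ := hcyc
  haveI : NeZero n := ⟨by omega⟩
  intro W S_W hS_W
  obtain ⟨hS_Wst, hS_Wmax⟩ := hS_W
  set S : Set V := Subtype.val '' S_W with hSdef
  have hSsubW : S ⊆ W := by
    rintro v ⟨u, hu, rfl⟩
    exact u.2
  have hSst : IsStable A S := by
    rintro u ⟨u', hu', rfl⟩ v ⟨v', hv', rfl⟩ hne hD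
    exact hS_Wst u' hu' v' hv' (fun h => hne (congrArg Subtype.val h)) hD
  have hScard : S.ncard = S_W.ncard := Set.ncard_image_of_injective _ Subtype.val_injective
  have hmaxV : ∀ T : Set V, T ⊆ W → IsStable A T → T.ncard ≤ S.ncard := by
    intro T hTW hTst
    have hT_W : IsStable (fun a b : W => A a.1 b.1) (Subtype.val ⁻¹' T) := by
      intro u hu v hv hne hD
      exact hTst u.1 hu v.1 hv (fun h => hne (Subtype.ext h)) hD
    have h1 := hS_Wmax _ hT_W
    have h2 : (Subtype.val '' (Subtype.val ⁻¹' T : Set ↥W)) = T := by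
      ext v
      constructor
      · rintro ⟨u, hu, rfl⟩
        exact hu
      · intro hv
        exact ⟨⟨v, hTW hv⟩, hv, rfl⟩
    have h3 := Set.ncard_image_of_injective (Subtype.val ⁻¹' T : Set ↥W) Subtype.val_injective
    rw [h2] at h3
    rw [h3, hScard]
    exact h1
  set I : Finset (ZMod n) := Finset.univ.filter (fun j => x j ∈ W) with hIdef
  have hximg : x '' ↑I = W := by
    ext v
    constructor
    · rintro ⟨j, hj, rfl⟩
      simpa [hIdef] using hj
    · intro hv
      obtain ⟨j, rfl⟩ := hx.2 v
      exact ⟨j, by simp [hIdef, hv], rfl⟩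
  by_cases hIu : I = Finset.univ
  · have hWuniv : W = Set.univ := by
      ext v
      simp only [Set.mem_univ, iff_true]
      obtain ⟨j, rfl⟩ := hx.2 v
      have : j ∈ I := hIu ▸ Finset.mem_univ j
      simpa [hIdef] using this
    have hmaxU : ∀ T : Set V, IsStable A T → T.ncard ≤ S.ncard := by
      intro T hT
      exact hmaxV T (by rw [hWuniv]; exact Set.subset_univ T) hT
    obtain ⟨P, hP⟩ := cycleLemma hn hx hadj hB hSst hmaxU
    rw [← hWuniv] at hP
    exact ⟨_, goodPart_transfer hP⟩
  · obtain ⟨P, hP⟩ := pathLemma hn hx hadj I.card I rfl hIu S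
      (by rw [hximg]; exact hSsubW) hSst
      (fun T hT hTst => hmaxV T (by rwa [hximg] at hT) hTst)
    rw [hximg] at hP
    exact ⟨_, goodPart_transfer hP⟩
end

section
/- Every locally in-semicomplete digraph is α-diperfect. -/
open Relation

variable {V : Type*}

theorem List.chain'_cons' {α : Type*} {R : α → α → Prop} {x : α} {l : List α} :
    List.Chain' R (x :: l) ↔ (∀ y ∈ l.head?, R x y) ∧ List.Chain' R l :=
  List.isChain_cons

theorem List.chain'_append {α : Type*} {R : α → α → Prop} {l₁ l₂ : List α} :
    List.Chain' R (l₁ ++ l₂) ↔ List.Chain' R l₁ ∧ List.Chain' R l₂ ∧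
      ∀ x ∈ l₁.getLast?, ∀ y ∈ l₂.head?, R x y :=
  List.isChain_append

namespace AlphaAux
variable {V : Type*} {A : V → V → Prop}



lemma backward {P : V → Prop} :
    ∀ (c : List V), (∀ p q a b, c = p ++ a :: b :: q → P b → P a) →
      (∀ x, c.getLast? = some x → P x) → ∀ y ∈ c, P y := by
  intro c
  induction c with
  | nil => intro _ _ y hy; simp at hy
  | cons a t ih =>
    intro hstep hlast y hy
    cases t with
    | nil =>
      simp at hy; subst hy
      exact hlast y rfl
    | cons b t' =>
      have ht : ∀ y ∈ b :: t', P y := by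
        refine ih ?_ ?_
        · intro p q x z hpq hz
          exact hstep (a :: p) q x z (by rw [hpq]; rfl) hz
        · intro x hx
          exact hlast x (by rw [List.getLast?_cons_cons]; exact hx)
      rcases List.mem_cons.1 hy with hy | hy
      · subst hy
        exact hstep [] t' y b rfl (ht b (by simp))
      · exact ht y hy

/-- Split a list whose head is outside `C` but which meets `C`:
prefix entirely outside `C`, suffix head in `C`. -/
lemma split_first_mem (C : Set V) :
    ∀ (l : List V), (∀ x, l.head? = some x → x ∉ C) → (∃ x ∈ l, x ∈ C) →
      ∃ l₁ l₂, l = l₁ ++ l₂ ∧ l₁ ≠ [] ∧ (∀ x ∈ l₁, x ∉ C) ∧ l₂ ≠ [] ∧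
        (∀ x, l₂.head? = some x → x ∈ C) := by
  intro l
  induction l with
  | nil => intro _ h; simp at h
  | cons a t ih =>
    intro hh hm
    have ha : a ∉ C := hh a rfl
    have hmt : ∃ x ∈ t, x ∈ C := by
      rcases hm with ⟨x, hx, hxC⟩
      rcases List.mem_cons.1 hx with rfl | hx
      · exact absurd hxC ha
      · exact ⟨x, hx, hxC⟩
    by_cases hth : ∀ x, t.head? = some x → x ∉ C
    · rcases ih hth hmt with ⟨l₁, l₂, heq, h1, h2, h3, h4⟩
      exact ⟨a :: l₁, l₂, by rw [heq]; rfl, by simp, by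
        intro x hx; rcases List.mem_cons.1 hx with rfl | hx
        · exact ha
        · exact h2 x hx, h3, h4⟩
    · push_neg at hth
      rcases hth with ⟨x, hx1, hx2⟩
      refine ⟨[a], t, rfl, by simp, by simpa using ha, ?_, ?_⟩
      · intro h; rw [h] at hx1; simp at hx1
      · intro y hy; rw [hx1] at hy; simp at hy; subst hy
        simpa using hx2

lemma split_last_mem (C : Set V) (l : List V)
    (hl : ∀ x, l.getLast? = some x → x ∉ C) (hm : ∃ x ∈ l, x ∈ C) :
    ∃ l₁ l₂, l = l₁ ++ l₂ ∧ l₁ ≠ [] ∧ (∀ x, l₁.getLast? = some x → x ∈ C) ∧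
      l₂ ≠ [] ∧ (∀ x ∈ l₂, x ∉ C) := by
  have h1 : ∀ x, l.reverse.head? = some x → x ∉ C := by
    intro x hx; exact hl x (by rwa [List.head?_reverse] at hx)
  have h2 : ∃ x ∈ l.reverse, x ∈ C := by
    rcases hm with ⟨x, hx, hxC⟩; exact ⟨x, List.mem_reverse.2 hx, hxC⟩
  rcases split_first_mem C l.reverse h1 h2 with ⟨r₁, r₂, heq, hr1, hr2, hr3, hr4⟩
  refine ⟨r₂.reverse, r₁.reverse, ?_, by simpa using hr3, ?_, by simpa using hr1, ?_⟩
  · have := congrArg List.reverse heq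
    simpa [List.reverse_append] using this.symm.symm
  · intro x hx
    rw [List.getLast?_reverse] at hx
    exact hr4 x hx
  · intro x hx
    exact hr2 x (List.mem_reverse.1 hx)

lemma flatten_nodup_unique {ps : List (List V)} (h : ps.flatten.Nodup) :
    ∀ v ∈ ps.flatten, ∃! l, l ∈ ps ∧ v ∈ l := by
  induction ps with
  | nil => intro v hv; simp at hv
  | cons p ps' ih =>
    intro v hv
    have hnd : (p ++ ps'.flatten).Nodup := by simpa using h
    have hdisj := List.disjoint_of_nodup_append hnd
    rcases List.mem_flatten.1 hv with ⟨l, hl, hvl⟩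
    rcases List.mem_cons.1 hl with rfl | hl
    · refine ⟨l, ⟨List.mem_cons_self, hvl⟩, ?_⟩
      rintro l' ⟨hl', hvl'⟩
      rcases List.mem_cons.1 hl' with rfl | hl'
      · rfl
      · exact absurd (List.mem_flatten.2 ⟨l', hl', hvl'⟩) (fun hc => hdisj hvl hc)
    · have hv' : v ∈ ps'.flatten := List.mem_flatten.2 ⟨l, hl, hvl⟩
      rcases ih (hnd.of_append_right) v hv' with ⟨m, ⟨hm1, hm2⟩, hm3⟩
      refine ⟨m, ⟨List.mem_cons_of_mem _ hm1, hm2⟩, ?_⟩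
      rintro l' ⟨hl', hvl'⟩
      rcases List.mem_cons.1 hl' with rfl | hl'
      · exact absurd hv' (fun hc => hdisj hvl' hc)
      · exact hm3 l' ⟨hl', hvl'⟩

lemma split_pieces (W : Set V) (A : V → V → Prop) :
    ∀ (l : List V), l.Chain' A → l ≠ [] → (∀ x, l.getLast? = some x → x ∈ W) →
      ∃ ps : List (List V), ps.flatten = l ∧
        ∀ p ∈ ps, p ≠ [] ∧ p.Chain' A ∧ (∃! y, y ∈ p ∧ y ∈ W) := by
  intro l
  induction l with
  | nil => intro _ h _; exact absurd rfl h
  | cons a t ih =>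
    intro hch _ hlast
    by_cases haW : a ∈ W
    · cases t with
      | nil =>
        refine ⟨[[a]], by simp, ?_⟩
        intro p hp; simp at hp; subst hp
        exact ⟨by simp, List.isChain_singleton _, ⟨a, ⟨by simp, haW⟩, by rintro y ⟨hy, _⟩; simpa using hy⟩⟩
      | cons b t' =>
        rcases ih hch.tail (by simp) (fun x hx => hlast x (by rwa [List.getLast?_cons_cons])) with
          ⟨ps', hflat, hprops⟩
        refine ⟨[a] :: ps', by simp [hflat], ?_⟩
        intro p hp
        rcases List.mem_cons.1 hp with rfl | hp
        · exact ⟨by simp, List.isChain_singleton _, ⟨a, ⟨by simp, haW⟩, by rintro y ⟨hy, _⟩; simpa using hy⟩⟩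
        · exact hprops p hp
    · have htne : t ≠ [] := by
        rintro rfl
        exact haW (hlast a rfl)
      rcases ih hch.tail htne (fun x hx => by
        cases t with
        | nil => exact absurd rfl htne
        | cons b t' => exact hlast x (by rwa [List.getLast?_cons_cons])) with ⟨ps', hflat, hprops⟩
      have hpsne : ps' ≠ [] := by rintro rfl; exact htne hflat.symm
      cases ps' with
      | nil => exact absurd rfl hpsne
      | cons p' rest =>
        have hp'props := hprops p' (by simp)
        refine ⟨(a :: p') :: rest, by simpa using hflat, ?_⟩
        intro p hp
        rcases List.mem_cons.1 hp with rfl | hp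
        · refine ⟨by simp, ?_, ?_⟩
          · rw [List.chain'_cons']
            constructor
            · intro y hy
              have hht : t.head? = some y := by
                rw [← hflat, List.flatten_cons, List.head?_append_of_ne_nil _ (hp'props.1)]
                exact hy
              rcases (List.chain'_cons'.1 hch) with ⟨h1, _⟩
              exact h1 y hht
            · exact hp'props.2.1
          · rcases hp'props.2.2 with ⟨y, ⟨hy1, hy2⟩, hy3⟩
            refine ⟨y, ⟨List.mem_cons_of_mem _ hy1, hy2⟩, ?_⟩
            rintro z ⟨hz1, hz2⟩
            rcases List.mem_cons.1 hz1 with rfl | hz1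
            · exact absurd hz2 haW
            · exact hy3 z ⟨hz1, hz2⟩
        · exact hprops p (List.mem_cons_of_mem _ hp)






/-- Arcs of the subdigraph induced on `U`. -/
def ArcIn (A : V → V → Prop) (U : Set V) (u v : V) : Prop := u ∈ U ∧ v ∈ U ∧ A u v

/-- Reachability inside `U`. -/
def ReachIn (A : V → V → Prop) (U : Set V) : V → V → Prop := ReflTransGen (ArcIn A U)

lemma reachIn_mono {U U' : Set V} (h : U ⊆ U') {u v : V} (hr : ReachIn A U u v) :
    ReachIn A U' u v := by
  induction hr with
  | refl => exact ReflTransGen.refl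
  | tail _ harc ih => exact ih.tail ⟨h harc.1, h harc.2.1, harc.2.2⟩

lemma path_of_reachIn {U : Set V} {u v : V} (hr : ReachIn A U u v) (hu : u ∈ U) :
    ∃ l : List V, l.Nodup ∧ l.Chain' A ∧ (∀ x ∈ l, x ∈ U) ∧
      l.head? = some u ∧ l.getLast? = some v := by
  induction hr using ReflTransGen.head_induction_on with
  | refl => exact ⟨[v], by simp, List.isChain_singleton _, by simpa using hu, by simp, by simp⟩
  | head harc _ ih =>
    rename_i a c _
    rcases ih harc.2.1 with ⟨l, hnd, hch, hmem, hhead, hlast⟩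
    by_cases hal : a ∈ l
    · rcases List.append_of_mem hal with ⟨s, t, rfl⟩
      have hsuf : (a :: t).Sublist (s ++ a :: t) := (List.suffix_append s (a :: t)).sublist
      obtain ⟨w, hw⟩ := Option.isSome_iff_exists.1 (List.getLast?_isSome.2
        (List.cons_ne_nil a t) : ((a :: t).getLast?).isSome)
      have hwv : w = v := by
        rw [List.getLast?_append, hw] at hlast
        simpa using hlast
      refine ⟨a :: t, hnd.sublist hsuf, hch.suffix (List.suffix_append s (a :: t)),
        fun x hx => hmem x (hsuf.mem hx), by simp, by rw [hw, hwv]⟩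
    · have hne : l ≠ [] := by rintro rfl; simp at hhead
      refine ⟨a :: l, by simp [hnd, hal], ?_, ?_, by simp, ?_⟩
      · rw [List.chain'_cons']
        refine ⟨?_, hch⟩
        intro y hy
        rw [hhead] at hy
        simp only [Option.mem_def, Option.some.injEq] at hy
        subst hy
        exact harc.2.2
      · intro x hx
        rcases List.mem_cons.1 hx with rfl | hx
        · exact harc.1
        · exact hmem x hx
      · show ([a] ++ l).getLast? = some v
        rw [List.getLast?_append, hlast]; rfl

/-- Insertion of a vertex adjacent to everything into a path. -/
lemma insert_adj (u : V) :
    ∀ (l : List V), l.Chain' A → (∀ x ∈ l, A u x ∨ A x u) →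
      ∃ p q, l = p ++ q ∧ (p ++ u :: q).Chain' A := by
  intro l
  induction l with
  | nil => exact fun _ _ => ⟨[], [], rfl, List.isChain_singleton _⟩
  | cons a t ih =>
    intro hch hadj
    rcases hadj a (by simp) with hua | hau
    · refine ⟨[], a :: t, rfl, ?_⟩
      show List.Chain' A (u :: a :: t)
      rw [List.chain'_cons']
      exact ⟨fun y hy => by simp at hy; subst hy; exact hua, hch⟩
    · rcases ih hch.tail (fun x hx => hadj x (List.mem_cons_of_mem _ hx)) with ⟨p', q', heq, hch'⟩
      cases p' with
      | nil =>
        refine ⟨[a], q', by simpa using heq, ?_⟩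
        rw [List.cons_append, List.chain'_cons']
        refine ⟨fun y hy => by simp at hy; subst hy; exact hau, by simpa using hch'⟩
      | cons b p'' =>
        refine ⟨a :: b :: p'', q', by rw [heq]; rfl, ?_⟩
        rw [List.cons_append, List.chain'_cons']
        refine ⟨?_, hch'⟩
        intro y hy
        simp only [List.cons_append, List.head?_cons, Option.mem_def, Option.some.injEq] at hy
        subst hy
        have : t.head? = some b := by rw [heq]; rfl
        exact (List.chain'_cons'.1 hch).1 b this

/-- Rédei-style: a finite pairwise adjacent set has a hamiltonian directed path. -/
lemma redei_finset [DecidableEq V] (K : Finset V)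
    (hadj : ∀ x ∈ K, ∀ y ∈ K, x ≠ y → A x y ∨ A y x) :
    ∃ l : List V, l.Nodup ∧ l.Chain' A ∧ ∀ x, x ∈ l ↔ x ∈ K := by
  induction K using Finset.induction_on with
  | empty => exact ⟨[], by simp, List.isChain_nil, by simp⟩
  | @insert a s has ih =>
    rcases ih (fun x hx y hy => hadj x (Finset.mem_insert_of_mem hx) y
      (Finset.mem_insert_of_mem hy)) with ⟨l, hnd, hch, hmem⟩
    have hal : a ∉ l := fun h => has ((hmem a).1 h)
    rcases insert_adj a l hch (fun x hx => hadj a (Finset.mem_insert_self _ _) x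
      (Finset.mem_insert_of_mem ((hmem x).1 hx)) (fun he => hal (he ▸ hx))) with
      ⟨p, q, heq, hch'⟩
    refine ⟨p ++ a :: q, ?_, hch', ?_⟩
    · have : (p ++ a :: q).Perm (a :: (p ++ q)) := List.perm_middle
      rw [this.nodup_iff]
      rw [heq] at hnd hal
      simp [hnd, hal]
    · intro x
      have h2 : x ∈ p ++ a :: q ↔ x = a ∨ x ∈ l := by
        rw [heq]; simp; tauto
      rw [h2, hmem]
      simp



lemma glast (l : List V) {l' : List V} (h : l' ≠ []) : (l ++ l').getLast? = l'.getLast? := by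
  rw [List.getLast?_append]
  obtain ⟨w, hw⟩ := Option.isSome_iff_exists.1 (List.getLast?_isSome.2 h)
  rw [hw]; rfl

/-- A cycle whose vertices lie in `F`. -/
def CycleOn (A : V → V → Prop) (F : Set V) (c : List V) : Prop :=
  c ≠ [] ∧ c.Nodup ∧ c.Chain' A ∧ (∀ x ∈ c, x ∈ F) ∧
    ∀ x y, c.getLast? = some x → c.head? = some y → A x y

lemma cycle_rotate {F : Set V} {c p q : List V} {x : V} (hc : CycleOn A F c)
    (heq : c = p ++ x :: q) :
    CycleOn A F (x :: (q ++ p)) ∧ c.Perm (x :: (q ++ p)) := by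
  obtain ⟨hne, hnd, hch, hmem, hwrap⟩ := hc
  have hperm : c.Perm (x :: (q ++ p)) := by
    rw [heq]
    exact List.perm_middle.trans (List.Perm.cons x (List.perm_append_comm))
  rw [heq] at hch
  obtain ⟨hp, hxq, hjun⟩ := List.chain'_append.1 hch
  have hq : List.Chain' A q := hxq.tail
  refine ⟨⟨by simp, hperm.nodup_iff.1 hnd, ?_, fun z hz => hmem z (hperm.mem_iff.2 hz), ?_⟩, hperm⟩
  · rw [List.chain'_cons']
    constructor
    · intro y hy
      cases q with
      | nil =>
        -- head of [] ++ p is head of p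
        simp only [List.nil_append] at hy
        have hpne : p ≠ [] := by rintro rfl; simp at hy
        have h1 : c.getLast? = some x := by rw [heq]; exact glast p (by simp)
        have h2 : c.head? = some y := by
          rw [heq, List.head?_append_of_ne_nil _ hpne]; exact hy
        exact hwrap x y h1 h2
      | cons b q' =>
        rw [List.head?_append_of_ne_nil _ (by simp)] at hy
        exact (List.chain'_cons'.1 hxq).1 y hy
    · refine List.chain'_append.2 ⟨hq, hp, ?_⟩
      intro a ha b hb
      have hqne : q ≠ [] := by rintro rfl; simp at ha
      have hpne : p ≠ [] := by rintro rfl; simp at hb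
      have h1 : c.getLast? = some a := by
        rw [heq, glast p (by simp)]
        show ([x] ++ q).getLast? = some a
        rw [glast [x] hqne]; exact ha
      have h2 : c.head? = some b := by rw [heq, List.head?_append_of_ne_nil _ hpne]; exact hb
      exact hwrap a b h1 h2
  · intro a y hlasta hheady
    have hxy : y = x := by simpa using hheady.symm
    rw [hxy]
    by_cases hpne : p = []
    · subst hpne
      by_cases hqne : q = []
      · subst hqne
        simp only [List.nil_append] at hlasta ⊢
        have hax : a = x := by simpa using hlasta.symm
        rw [hax]
        exact hwrap x x (by rw [heq]; simp) (by rw [heq]; simp)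
      · have h1 : (x :: (q ++ [])).getLast? = q.getLast? := by
          rw [List.append_nil]
          show ([x] ++ q).getLast? = q.getLast?
          exact glast [x] hqne
        rw [h1] at hlasta
        have h2 : c.getLast? = some a := by
          rw [heq]
          show ([] ++ [x] ++ q).getLast? = some a
          rw [List.nil_append, glast [x] hqne]; exact hlasta
        have h3 : c.head? = some x := by rw [heq]; simp
        exact hwrap a x h2 h3
    · have h1 : (x :: (q ++ p)).getLast? = p.getLast? := by
        show ((x :: q) ++ p).getLast? = p.getLast?
        exact glast (x :: q) hpne
      rw [h1] at hlasta
      exact hjun a hlasta x (by simp)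



lemma exists_longest_cycle [Finite V] {F : Set V} (h : ∃ c, CycleOn A F c) :
    ∃ c, CycleOn A F c ∧ ∀ c', CycleOn A F c' → c'.length ≤ c.length := by
  have : Fintype V := Fintype.ofFinite V
  set L := {k | ∃ c, CycleOn A F c ∧ c.length = k} with hL
  have hbdd : BddAbove L := by
    refine ⟨Fintype.card V, ?_⟩
    rintro k ⟨c, hc, rfl⟩
    exact hc.2.1.length_le_card
  obtain ⟨c₀, hc₀⟩ := h
  have hmem : sSup L ∈ L := Nat.sSup_mem ⟨c₀.length, c₀, hc₀, rfl⟩ hbdd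
  obtain ⟨c, hc, hlen⟩ := hmem
  exact ⟨c, hc, fun c' hc' => hlen ▸ le_csSup hbdd ⟨c', hc', rfl⟩⟩

theorem ham_cycle [Finite V] (hloc : ∀ v u w : V, A u v → A w v → u ≠ w → A u w ∨ A w u)
    {F : Set V} (hstrong : ∀ u ∈ F, ∀ v ∈ F, ReachIn A F u v)
    {a₀ b₀ : V} (ha₀ : a₀ ∈ F) (hb₀ : b₀ ∈ F) (hab₀ : A a₀ b₀) :
    ∃ c, CycleOn A F c ∧ ∀ x ∈ F, x ∈ c := by
  -- a cycle exists
  have hex : ∃ c, CycleOn A F c := by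
    obtain ⟨l, hnd, hch, hmem, hhead, hlast⟩ := path_of_reachIn (hstrong b₀ hb₀ a₀ ha₀) hb₀
    refine ⟨l, by rintro rfl; simp at hhead, hnd, hch, hmem, ?_⟩
    intro x y hx hy
    rw [hlast] at hx; rw [hhead] at hy
    simp only [Option.mem_def, Option.some.injEq] at *
    rw [hx, hy] at hab₀; exact hab₀
  obtain ⟨c, hc, hmax⟩ := exists_longest_cycle hex
  refine ⟨c, hc, ?_⟩
  by_contra hcon
  push_neg at hcon
  obtain ⟨v, hvF, hvc⟩ := hcon
  obtain ⟨hcne, hcnd, hcch, hcmem, hcwrap⟩ := hc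
  -- head of c
  obtain ⟨h₀, hh₀⟩ := Option.isSome_iff_exists.1 (List.isSome_head?.2 hcne)
  have hh₀c : h₀ ∈ c := List.mem_of_mem_head? (by rw [hh₀]; rfl)
  -- a path from v to c
  obtain ⟨p, hpnd, hpch, hpmem, hphead, hplast⟩ :=
    path_of_reachIn (hstrong v hvF h₀ (hcmem h₀ hh₀c)) hvF
  obtain ⟨p₁, p₂, hpeq, hp₁ne, hp₁out, hp₂ne, hp₂head⟩ :=
    split_first_mem {x | x ∈ c} p
      (fun x hx => by rw [hphead] at hx; simp only [Option.some.injEq] at hx; rwa [hx] at hvc)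
      ⟨h₀, List.mem_of_mem_getLast? (by rw [hplast]; rfl), hh₀c⟩
  obtain ⟨u, hu⟩ := Option.isSome_iff_exists.1 (List.getLast?_isSome.2 hp₁ne)
  have huc : u ∉ c := hp₁out u (List.mem_of_mem_getLast? (by rw [hu]; rfl))
  have huF : u ∈ F := by
    refine hpmem u ?_
    rw [hpeq]
    exact List.mem_append_left _ (List.mem_of_mem_getLast? (by rw [hu]; rfl))
  obtain ⟨x₀, hx₀⟩ := Option.isSome_iff_exists.1 (List.isSome_head?.2 hp₂ne)
  have hx₀c : x₀ ∈ c := hp₂head x₀ hx₀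
  have hux₀ : A u x₀ := by
    rw [hpeq] at hpch
    exact (List.chain'_append.1 hpch).2.2 u (by rw [hu]; rfl) x₀ (by rw [hx₀]; rfl)
  -- rotate c to start at x₀
  obtain ⟨s, t, hst⟩ := List.append_of_mem hx₀c
  obtain ⟨hcR, hpermR⟩ := cycle_rotate ⟨hcne, hcnd, hcch, hcmem, hcwrap⟩ hst
  set cR := x₀ :: (t ++ s) with hcRdef
  have hlenR : cR.length = c.length := hpermR.length_eq.symm
  have hucR : u ∉ cR := fun h => huc (hpermR.mem_iff.2 h)
  -- u dominates all of cR
  have hdomR : ∀ y ∈ cR, A u y := by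
    refine backward cR ?_ ?_
    · -- step
      intro p' q' a b hdec hub
      obtain ⟨hRne, hRnd, hRch, hRmem, hRwrap⟩ := hcR
      rw [hdec] at hRch
      obtain ⟨hp', habq, hjun⟩ := List.chain'_append.1 hRch
      have hab : A a b := (List.chain'_cons'.1 habq).1 b rfl
      have hacR : a ∈ cR := by rw [hdec]; exact List.mem_append_right _ (by simp)
      have hane : a ≠ u := fun h => hucR (h ▸ hacR)
      rcases hloc b a u hab hub hane with hau | hua
      · -- A a u : insert u, contradiction
        exfalso
        set cI := p' ++ a :: u :: b :: q' with hcI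
        have hpermI : cI.Perm (u :: cR) := by
          rw [hdec, hcI]
          have e1 : p' ++ a :: u :: b :: q' = (p' ++ [a]) ++ u :: (b :: q') := by simp
          have e2 : (p' ++ [a]) ++ (b :: q') = p' ++ a :: b :: q' := by simp
          rw [e1, ← e2]
          exact List.perm_middle
        have hIne : cI ≠ [] := by rw [hcI]; simp
        have hInd : cI.Nodup := hpermI.nodup_iff.2 (by simp [hRnd, hucR])
        have hIch : cI.Chain' A := by
          rw [hcI]
          refine List.chain'_append.2 ⟨hp', ?_, ?_⟩
          · rw [List.chain'_cons']
            refine ⟨fun y hy => by simp at hy; subst hy; exact hau, ?_⟩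
            rw [List.chain'_cons']
            exact ⟨fun y hy => by simp at hy; subst hy; exact hub, habq.tail⟩
          · intro x hx y hy
            simp only [List.head?_cons, Option.mem_def, Option.some.injEq] at hy
            subst hy
            exact hjun x hx a rfl
        have hImem : ∀ x ∈ cI, x ∈ F := by
          intro x hx
          rcases List.mem_cons.1 (hpermI.mem_iff.1 hx) with hx' | hx'
          · subst hx'; exact huF
          · exact hRmem x hx'
        have hIwrap : ∀ x y, cI.getLast? = some x → cI.head? = some y → A x y := by
          intro x y hx hy
          refine hRwrap x y ?_ ?_
          · rw [hcI, glast p' (by simp), List.getLast?_cons_cons, List.getLast?_cons_cons] at hx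
            rw [hdec, glast p' (by simp), List.getLast?_cons_cons]
            exact hx
          · rw [hcI] at hy
            rw [hdec]
            cases p' with
            | nil => simpa using hy
            | cons w p'' => simpa using hy
        have := hmax cI ⟨hIne, hInd, hIch, hImem, hIwrap⟩
        rw [hpermI.length_eq, List.length_cons, hlenR] at this
        omega
      · exact hua
    · -- last
      intro z hz
      obtain ⟨hRne, hRnd, hRch, hRmem, hRwrap⟩ := hcR
      have hzx₀ : A z x₀ := hRwrap z x₀ hz rfl
      have hzcR : z ∈ cR := List.mem_of_mem_getLast? (by rw [hz]; rfl)
      have hzne : z ≠ u := fun h => hucR (h ▸ hzcR)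
      rcases hloc x₀ z u hzx₀ hux₀ hzne with hzu | huz
      · -- A z u : extend cycle by u at the end, contradiction
        exfalso
        set cE := cR ++ [u] with hcE
        have hcEcyc : CycleOn A F cE := by
          refine ⟨by simp [hcE], ?_, ?_, ?_, ?_⟩
          · exact List.Nodup.append hRnd (by simp) (by intro x hx hx'; simp at hx'; subst hx'; exact hucR hx)
          · refine List.chain'_append.2 ⟨hRch, List.isChain_singleton _, ?_⟩
            intro x hx y hy
            simp only [List.head?_cons, Option.mem_def, Option.some.injEq] at hy
            subst hy
            rw [hz] at hx
            simp only [Option.mem_def, Option.some.injEq] at hx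
            rwa [hx] at hzu
          · intro x hx
            rcases List.mem_append.1 hx with hx | hx
            · exact hRmem x hx
            · simp at hx; subst hx; exact huF
          · intro x y hx hy
            rw [List.getLast?_concat] at hx
            rw [List.head?_append_of_ne_nil _ hRne] at hy
            simp only [Option.some.injEq] at hx
            subst hx
            have : y = x₀ := by
              rw [hcRdef] at hy
              simpa using hy.symm
            subst this
            exact hux₀
        have := hmax cE hcEcyc
        rw [hcE, List.length_append, List.length_singleton, hlenR] at this
        omega
      · exact huz
  -- u dominates all of c
  have hdom : ∀ y ∈ c, A u y := fun y hy => hdomR y (hpermR.mem_iff.1 hy)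
  -- a path from x₀ back to u
  obtain ⟨r, hrnd, hrch, hrmem, hrhead, hrlast⟩ :=
    path_of_reachIn (hstrong x₀ (hcmem x₀ hx₀c) u huF) (hcmem x₀ hx₀c)
  obtain ⟨r₁, r₂, hreq, hr₁ne, hr₁last, hr₂ne, hr₂out⟩ :=
    split_last_mem {x | x ∈ c} r
      (fun x hx => by
        rw [hrlast] at hx
        simp only [Option.some.injEq] at hx
        rw [← hx]
        exact huc)
      ⟨x₀, List.mem_of_mem_head? (by rw [hrhead]; rfl), hx₀c⟩
  obtain ⟨z₀, hz₀⟩ := Option.isSome_iff_exists.1 (List.getLast?_isSome.2 hr₁ne)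
  have hz₀c : z₀ ∈ c := hr₁last z₀ hz₀
  obtain ⟨w₂, hw₂⟩ := Option.isSome_iff_exists.1 (List.isSome_head?.2 hr₂ne)
  have harc2 : A z₀ w₂ := by
    rw [hreq] at hrch
    exact (List.chain'_append.1 hrch).2.2 z₀ (by rw [hz₀]; rfl) w₂ (by rw [hw₂]; rfl)
  -- rotate c at z₀
  obtain ⟨s', t', hst'⟩ := List.append_of_mem hz₀c
  obtain ⟨hcZ, hpermZ⟩ := cycle_rotate ⟨hcne, hcnd, hcch, hcmem, hcwrap⟩ hst'
  obtain ⟨hZne, hZnd, hZch, hZmem, hZwrap⟩ := hcZ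
  set cZ := z₀ :: (t' ++ s') with hcZdef
  have hr₂sub : r₂.Sublist r := by rw [hreq]; exact (List.suffix_append r₁ r₂).sublist
  set BIG := (t' ++ s') ++ z₀ :: r₂ with hBIG
  have hpermBIG : BIG.Perm (cZ ++ r₂) := by
    rw [hBIG, hcZdef]
    exact List.perm_middle
  have hBIGnd : BIG.Nodup := by
    rw [hpermBIG.nodup_iff]
    refine List.Nodup.append hZnd (hrnd.sublist hr₂sub) ?_
    intro x hx hx'
    exact hr₂out x hx' (hpermZ.mem_iff.2 hx)
  have hBIGch : BIG.Chain' A := by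
    refine List.chain'_append.2 ⟨hZch.tail, ?_, ?_⟩
    · rw [List.chain'_cons']
      refine ⟨?_, hrch.suffix (by rw [hreq]; exact List.suffix_append r₁ r₂)⟩
      intro y hy
      rw [hw₂] at hy
      simp only [Option.mem_def, Option.some.injEq] at hy
      rwa [hy] at harc2
    · intro w hw y hy
      simp only [List.head?_cons, Option.mem_def, Option.some.injEq] at hy
      subst hy
      have hne2 : (t' ++ s') ≠ [] := by
        rintro h
        rw [h] at hw; simp at hw
      refine hZwrap w z₀ ?_ rfl
      show ([z₀] ++ (t' ++ s')).getLast? = some w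
      rw [glast [z₀] hne2]
      exact hw
  have hBIGmem : ∀ x ∈ BIG, x ∈ F := by
    intro x hx
    rcases List.mem_append.1 (hpermBIG.mem_iff.1 hx) with hx | hx
    · exact hZmem x hx
    · exact hrmem x (hr₂sub.mem hx)
  have hBIGlast : BIG.getLast? = some u := by
    rw [hBIG, glast (t' ++ s') (by simp)]
    show ([z₀] ++ r₂).getLast? = some u
    rw [glast [z₀] hr₂ne]
    rw [hreq] at hrlast
    rw [← hrlast, glast r₁ hr₂ne]
  have hBIGwrap : ∀ x y, BIG.getLast? = some x → BIG.head? = some y → A x y := by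
    intro x y hx hy
    rw [hBIGlast] at hx
    simp only [Option.some.injEq] at hx
    subst hx
    refine hdom y ?_
    by_cases hne2 : (t' ++ s') = []
    · rw [hBIG, hne2] at hy
      simp only [List.nil_append, List.head?_cons, Option.some.injEq] at hy
      subst hy
      exact hz₀c
    · rw [hBIG, List.head?_append_of_ne_nil _ hne2] at hy
      have : y ∈ cZ := by
        rw [hcZdef]
        exact List.mem_cons_of_mem _ (List.mem_of_mem_head? (by rw [hy]; rfl))
      exact hpermZ.mem_iff.2 this
  have hfin := hmax BIG ⟨by simp [hBIG], hBIGnd, hBIGch, hBIGmem, hBIGwrap⟩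
  have hlenZ : cZ.length = c.length := hpermZ.length_eq.symm
  have : BIG.length = cZ.length + r₂.length := by
    rw [hpermBIG.length_eq, List.length_append]
  have hr₂pos : 0 < r₂.length := List.length_pos_iff.2 hr₂ne
  omega

section Comp
variable [Finite V]

lemma reach_mem {U : Set V} {u v : V} (h : ReachIn A U u v) (hu : u ∈ U) : v ∈ U := by
  induction h with
  | refl => exact hu
  | tail _ harc _ => exact harc.2.1

lemma reach_restrict {F U : Set V} {u v : V} (h : ReachIn A U u v)
    (hmid : ∀ w, ReachIn A U u w → ReachIn A U w v → w ∈ F) : ReachIn A F u v := by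
  induction h using ReflTransGen.head_induction_on with
  | refl => exact ReflTransGen.refl
  | head harc hrest ih =>
    rename_i a c
    have haF : a ∈ F := hmid a ReflTransGen.refl (ReflTransGen.head harc hrest)
    have hcF : c ∈ F := hmid c (ReflTransGen.single harc) hrest
    refine ReflTransGen.head ⟨haF, hcF, harc.2.2⟩ (ih ?_)
    intro w h1 h2
    exact hmid w (ReflTransGen.head harc h1) h2

/-- Existence of a final strong component of the subdigraph on `U`. -/
lemma exists_final_comp {U : Set V} (hU : U.Nonempty) :
    ∃ F : Set V, F.Nonempty ∧ F ⊆ U ∧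
      (∀ u ∈ F, ∀ v ∈ F, ReachIn A F u v) ∧
      (∀ x ∈ F, ∀ y ∈ U, A x y → y ∈ F) := by
  obtain ⟨v₀, hv₀U, hmin⟩ := Set.exists_min_image U
    (fun v => {u ∈ U | ReachIn A U v u}.ncard) (Set.toFinite U) hU
  have hmaxim : ∀ y ∈ U, ReachIn A U v₀ y → ReachIn A U y v₀ := by
    intro y hyU hvy
    have hsub : {u ∈ U | ReachIn A U y u} ⊆ {u ∈ U | ReachIn A U v₀ u} := by
      rintro u ⟨huU, hyu⟩
      exact ⟨huU, hvy.trans hyu⟩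
    have heq := Set.eq_of_subset_of_ncard_le hsub (hmin y hyU) (Set.toFinite _)
    have : v₀ ∈ {u ∈ U | ReachIn A U v₀ u} := ⟨hv₀U, ReflTransGen.refl⟩
    rw [← heq] at this
    exact this.2
  refine ⟨{u ∈ U | ReachIn A U v₀ u ∧ ReachIn A U u v₀}, ⟨v₀, hv₀U,
    ReflTransGen.refl, ReflTransGen.refl⟩, fun u hu => hu.1, ?_, ?_⟩
  · rintro u ⟨huU, hvu, huv⟩ v ⟨hvU, hvv, hvv'⟩
    refine reach_restrict (huv.trans hvv) ?_
    intro w h1 h2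
    have hwU : w ∈ U := reach_mem h1 huU
    exact ⟨hwU, hvu.trans h1, h2.trans hvv'⟩
  · rintro x ⟨hxU, hvx, hxv⟩ y hyU hxy
    have h1 : ReachIn A U v₀ y := hvx.tail ⟨hxU, hyU, hxy⟩
    exact ⟨hyU, h1, hmaxim y hyU h1⟩

/-- A vertex outside a final component with an arc into it dominates it. -/
lemma dominate (hloc : ∀ v u w : V, A u v → A w v → u ≠ w → A u w ∨ A w u)
    {U F : Set V} (hFU : F ⊆ U)
    (hstrong : ∀ u ∈ F, ∀ v ∈ F, ReachIn A F u v)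
    (hfinal : ∀ x ∈ F, ∀ y ∈ U, A x y → y ∈ F)
    {k f : V} (hkU : k ∈ U) (hkF : k ∉ F) (hf : f ∈ F) (hkf : A k f) :
    ∀ f' ∈ F, A k f' := by
  intro f' hf'
  obtain ⟨l, hlnd, hlch, hlmem, hlhead, hllast⟩ := path_of_reachIn (hstrong f' hf' f hf) hf'
  refine backward l ?_ ?_ f' (List.mem_of_mem_head? (by rw [hlhead]; rfl))
  · intro p q a b hdec hkb
    have hab : A a b := by
      rw [hdec] at hlch
      exact (List.chain'_cons'.1 (List.chain'_append.1 hlch).2.1).1 b rfl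
    have haF : a ∈ F := hlmem a (by rw [hdec]; exact List.mem_append_right _ (by simp))
    have hane : a ≠ k := fun h => hkF (h ▸ haF)
    rcases hloc b a k hab hkb hane with hak | hka
    · exact absurd (hfinal a haF k hkU hak) hkF
    · exact hka
  · intro x hx
    rw [hllast] at hx
    simp only [Option.some.injEq] at hx
    rwa [hx] at hkf

lemma first_arc {F : Set V} {u v : V} (h : ReachIn A F u v) (hne : u ≠ v) :
    ∃ c, ArcIn A F u c := by
  rcases h.cases_head with he | ⟨c, harc, _⟩
  · exact absurd he hne
  · exact ⟨c, harc⟩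

lemma cover_path_ending (hloc : ∀ v u w : V, A u v → A w v → u ≠ w → A u w ∨ A w u)
    {F : Set V} {w₀ : V} (hw₀ : w₀ ∈ F)
    (hstrong : ∀ u ∈ F, ∀ v ∈ F, ReachIn A F u v) :
    ∃ e : List V, e ≠ [] ∧ e.Nodup ∧ e.Chain' A ∧ (∀ x, x ∈ e ↔ x ∈ F) ∧
      e.getLast? = some w₀ := by
  by_cases hsing : ∀ y ∈ F, y = w₀
  · refine ⟨[w₀], by simp, by simp, List.isChain_singleton _, ?_, by simp⟩
    intro x
    simp only [List.mem_singleton]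
    exact ⟨fun h => h ▸ hw₀, fun h => hsing x h⟩
  · push_neg at hsing
    obtain ⟨y, hyF, hyne⟩ := hsing
    obtain ⟨c₁, harc⟩ := first_arc (hstrong w₀ hw₀ y hyF) (fun h => hyne h.symm)
    obtain ⟨c, hcyc, hcov⟩ := ham_cycle hloc hstrong hw₀ harc.2.1 harc.2.2
    obtain ⟨s, t, hst⟩ := List.append_of_mem (hcov w₀ hw₀)
    obtain ⟨hcR, hperm⟩ := cycle_rotate hcyc hst
    obtain ⟨hRne, hRnd, hRch, hRmem, hRwrap⟩ := hcR
    have hpermE : ((t ++ s) ++ [w₀]).Perm (w₀ :: (t ++ s)) := by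
      have := List.perm_middle (a := w₀) (l₁ := t ++ s) (l₂ := ([] : List V))
      simpa using this
    refine ⟨(t ++ s) ++ [w₀], by simp, hpermE.nodup_iff.2 hRnd, ?_, ?_, List.getLast?_concat⟩
    · refine List.chain'_append.2 ⟨hRch.tail, List.isChain_singleton _, ?_⟩
      intro z hz y' hy'
      simp only [List.head?_cons, Option.mem_def, Option.some.injEq] at hy'
      subst hy'
      refine hRwrap z w₀ ?_ rfl
      have hne2 : (t ++ s) ≠ [] := by
        rintro h; rw [h] at hz; simp at hz
      show ([w₀] ++ (t ++ s)).getLast? = some z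
      rw [glast [w₀] hne2]
      exact hz
    · intro x
      rw [hpermE.mem_iff]
      constructor
      · intro hx
        rcases List.mem_cons.1 hx with rfl | hx
        · exact hw₀
        · refine hcyc.2.2.2.1 x ?_
          rw [hst]
          rcases List.mem_append.1 hx with hx | hx
          · exact List.mem_append_right _ (List.mem_cons_of_mem _ hx)
          · exact List.mem_append_left _ hx
      · intro hx
        have := hcov x hx
        rw [hst] at this
        rcases List.mem_append.1 this with hx' | hx'
        · exact List.mem_cons_of_mem _ (List.mem_append_right _ hx')
        · rcases List.mem_cons.1 hx' with rfl | hx'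
          · exact List.mem_cons_self
          · exact List.mem_cons_of_mem _ (List.mem_append_left _ hx')

/-- A maximal-stable-set path-partition datum on a vertex set `U`. -/
def GoodPart (A : V → V → Prop) (U S : Set V) (P : Set (List V)) : Prop :=
  (∀ l ∈ P, l ≠ [] ∧ l.Nodup ∧ l.Chain' A ∧ ∀ x ∈ l, x ∈ U) ∧
  (∀ v ∈ U, ∃! l, l ∈ P ∧ v ∈ l) ∧
  (∀ l ∈ P, ∃! s, s ∈ l ∧ s ∈ S)

def MaxStableOn (A : V → V → Prop) (U S : Set V) : Prop :=
  S ⊆ U ∧ IsStable A S ∧ ∀ T : Set V, T ⊆ U → IsStable A T → T.ncard ≤ S.ncard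

lemma glue {U S B : Set V} (hBU : B ⊆ U) {P'' : Set (List V)} {qs : List (List V)}
    (h1 : GoodPart A (U \ B) (S \ B) P'')
    (h2 : qs.flatten.Nodup)
    (h3 : ∀ x, x ∈ qs.flatten ↔ x ∈ B)
    (h4 : ∀ p ∈ qs, p ≠ [] ∧ p.Chain' A ∧ (∃! s, s ∈ p ∧ s ∈ S)) :
    GoodPart A U S ({l | l ∈ qs} ∪ P'') := by
  obtain ⟨g1, g2, g3⟩ := h1
  refine ⟨?_, ?_, ?_⟩
  · rintro l (hl | hl)
    · refine ⟨(h4 l hl).1, h2.sublist (List.sublist_flatten_of_mem hl), (h4 l hl).2.1, ?_⟩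
      intro x hx
      exact hBU ((h3 x).1 (List.mem_flatten.2 ⟨l, hl, hx⟩))
    · obtain ⟨ha, hb, hc, hd⟩ := g1 l hl
      exact ⟨ha, hb, hc, fun x hx => (hd x hx).1⟩
  · intro v hv
    by_cases hvB : v ∈ B
    · obtain ⟨l, ⟨hl1, hl2⟩, hl3⟩ := flatten_nodup_unique h2 v ((h3 v).2 hvB)
      refine ⟨l, ⟨Or.inl hl1, hl2⟩, ?_⟩
      rintro l' ⟨hl' | hl', hv'⟩
      · exact hl3 l' ⟨hl', hv'⟩
      · exact absurd hvB ((g1 l' hl').2.2.2 v hv').2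
    · obtain ⟨l, ⟨hl1, hl2⟩, hl3⟩ := g2 v ⟨hv, hvB⟩
      refine ⟨l, ⟨Or.inr hl1, hl2⟩, ?_⟩
      rintro l' ⟨hl' | hl', hv'⟩
      · exact absurd ((h3 v).1 (List.mem_flatten.2 ⟨l', hl', hv'⟩)) hvB
      · exact hl3 l' ⟨hl', hv'⟩
  · rintro l (hl | hl)
    · exact (h4 l hl).2.2
    · obtain ⟨s, ⟨hs1, hs2⟩, hs3⟩ := g3 l hl
      refine ⟨s, ⟨hs1, hs2.1⟩, ?_⟩
      rintro s' ⟨hs1', hs2'⟩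
      exact hs3 s' ⟨hs1', hs2', ((g1 l hl).2.2.2 s' hs1').2⟩

lemma goodpart_empty {U S : Set V} (h : U = ∅) : GoodPart A U S ∅ :=
  ⟨fun l hl => absurd hl (Set.notMem_empty l),
   fun v hv => absurd hv (by rw [h]; exact Set.notMem_empty v),
   fun l hl => absurd hl (Set.notMem_empty l)⟩

theorem core (hloc : ∀ v u w : V, A u v → A w v → u ≠ w → A u w ∨ A w u) :
    ∀ (n : ℕ) (U S : Set V), U.ncard ≤ n → MaxStableOn A U S → ∃ P, GoodPart A U S P := by
  intro n
  induction n with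
  | zero =>
    intro U S hUcard _
    exact ⟨∅, goodpart_empty ((Set.ncard_eq_zero (Set.toFinite U)).1 (Nat.le_zero.1 hUcard))⟩
  | succ n ih =>
    intro U S hUcard hmax
    by_cases hUe : U = ∅
    · exact ⟨∅, goodpart_empty hUe⟩
    obtain ⟨hSU, hSst, hSmax⟩ := hmax
    obtain ⟨F, hFne, hFU, hFstrong, hFfinal⟩ :=
      exists_final_comp (A := A) (Set.nonempty_iff_ne_empty.2 hUe)
    obtain ⟨f₀, hf₀⟩ := hFne
    have hSne : S.Nonempty := by
      obtain ⟨u₀, hu₀⟩ := Set.nonempty_iff_ne_empty.2 hUe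
      have hst : IsStable A {u₀} := by
        intro u hu v hv hne _
        simp only [Set.mem_singleton_iff] at hu hv
        exact hne (hu.trans hv.symm)
      have h1 := hSmax {u₀} (by simpa using hu₀) hst
      rw [Set.ncard_singleton] at h1
      exact Set.nonempty_of_ncard_ne_zero (by omega)
    classical
    set K := {k : V | k ∈ U ∧ k ∉ F ∧ A k f₀} with hKdef
    have hdomK : ∀ k ∈ K, ∀ f ∈ F, A k f := by
      rintro k ⟨hkU, hkF, hkf⟩ f hf
      exact dominate hloc hFU hFstrong hFfinal hkU hkF hf₀ hkf f hf
    have hKU : K ⊆ U := fun k hk => hk.1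
    have hKadj : ∀ k ∈ K, ∀ k' ∈ K, k ≠ k' → A k k' ∨ A k' k := fun k hk k' hk' hne =>
      hloc f₀ k k' (hdomK k hk f₀ hf₀) (hdomK k' hk' f₀ hf₀) hne
    have hKin : ∀ t ∈ U, t ∉ F → ∀ f ∈ F, DAdj A t f → t ∈ K := by
      intro t htU htF f hf hadj
      rcases hadj with h | h
      · exact ⟨htU, htF, dominate hloc hFU hFstrong hFfinal htU htF hf h f₀ hf₀⟩
      · exact absurd (hFfinal f hf t htU h) htF
    have hKuniq : ∀ T, IsStable A T → ∀ a, a ∈ T → a ∈ K → ∀ b, b ∈ T → b ∈ K → a = b := by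
      intro T hT a haT haK b hbT hbK
      by_contra hne
      exact hT a haT b hbT hne (hKadj a haK b hbK hne)
    have hext : ∀ t ∈ U, t ∉ S → ∃ s ∈ S, DAdj A t s := by
      intro t htU htS
      by_contra hcon
      push_neg at hcon
      have hstable : IsStable A (insert t S) := by
        intro u hu v hv hne hadj
        rcases Set.mem_insert_iff.1 hu with hue | huS
        · rcases Set.mem_insert_iff.1 hv with hve | hvS
          · exact hne (hue.trans hve.symm)
          · exact hcon v hvS (hue ▸ hadj)
        · rcases Set.mem_insert_iff.1 hv with hve | hvS
          · exact hcon u huS (hve ▸ hadj.symm)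
          · exact hSst u huS v hvS hne hadj
      have h1 := hSmax (insert t S) (Set.insert_subset htU hSU) hstable
      rw [Set.ncard_insert_of_notMem htS (Set.toFinite S)] at h1
      omega
    by_cases hWne : (S ∩ F).Nonempty
    · -- Case A : S meets the final component
      obtain ⟨w₀, hw₀⟩ := hWne
      have hSK : ∀ s ∈ S, s ∉ K := by
        intro s hs hsK
        have hadj : A s w₀ := hdomK s hsK w₀ hw₀.2
        have hne : s ≠ w₀ := fun h => hsK.2.1 (h ▸ hw₀.2)
        exact hSst s hs w₀ hw₀.1 hne (Or.inl hadj)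
      set K₀ := {t : V | t ∈ K ∧ ∃ T : Set V, T ⊆ U \ F ∧ IsStable A T ∧
        (S \ F).ncard + 1 ≤ T.ncard ∧ t ∈ T} with hK₀def
      have hK₀K : K₀ ⊆ K := fun t ht => ht.1
      obtain ⟨R, hRnd, hRch, hRmem⟩ := redei_finset (A := A) (Set.toFinite K₀).toFinset
        (by
          intro a ha b hb hne
          rw [Set.Finite.mem_toFinset] at ha hb
          exact hKadj a (hK₀K ha) b (hK₀K hb) hne)
      have hRK₀ : ∀ x, x ∈ R ↔ x ∈ K₀ := by
        intro x; rw [hRmem x, Set.Finite.mem_toFinset]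
      set B := F ∪ K₀ with hBdef
      have hBU : B ⊆ U := Set.union_subset hFU (fun t ht => hKU (hK₀K ht))
      have hSdiffB : S \ B = S \ F := by
        ext s
        simp only [Set.mem_diff, hBdef, Set.mem_union]
        constructor
        · rintro ⟨hs, hnot⟩; exact ⟨hs, fun hf => hnot (Or.inl hf)⟩
        · rintro ⟨hs, hf⟩
          exact ⟨hs, fun h => h.elim hf (fun hk => hSK s hs (hK₀K hk))⟩
      have hWcard : (S \ F).ncard + (S ∩ F).ncard = S.ncard := by
        rw [← Set.ncard_union_eq (Set.disjoint_left.2 fun a ha ha' => ha.2 ha'.2)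
          (Set.toFinite _) (Set.toFinite _), Set.diff_union_inter]
      have hmax' : MaxStableOn A (U \ B) (S \ B) := by
        refine ⟨fun s hs => ⟨hSU hs.1, hs.2⟩,
          fun u hu v hv hne hadj => hSst u hu.1 v hv.1 hne hadj, ?_⟩
        intro T hT hTst
        rw [hSdiffB]
        by_contra hcon
        push_neg at hcon
        have hTUF : T ⊆ U \ F := fun t ht => ⟨(hT ht).1, fun hf => (hT ht).2 (Or.inl hf)⟩
        by_cases hTK : ∀ t ∈ T, t ∉ K
        · have hstable : IsStable A (T ∪ (S ∩ F)) := by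
            intro u hu v hv hne hadj
            rcases hu with hu | hu <;> rcases hv with hv | hv
            · exact hTst u hu v hv hne hadj
            · exact hTK u hu (hKin u (hTUF hu).1 (hTUF hu).2 v hv.2 hadj)
            · exact hTK v hv (hKin v (hTUF hv).1 (hTUF hv).2 u hu.2 hadj.symm)
            · exact hSst u hu.1 v hv.1 hne hadj
          have hdisj : Disjoint T (S ∩ F) := Set.disjoint_left.2 fun t ht htW => (hTUF ht).2 htW.2
          have hcard := hSmax (T ∪ (S ∩ F))
            (Set.union_subset (fun t ht => (hT ht).1) (fun w hw => hSU hw.1)) hstable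
          rw [Set.ncard_union_eq hdisj (Set.toFinite T) (Set.toFinite _)] at hcard
          omega
        · push_neg at hTK
          obtain ⟨t, htT, htK⟩ := hTK
          have hstable : IsStable A ((T \ {t}) ∪ (S ∩ F)) := by
            intro u hu v hv hne hadj
            rcases hu with hu | hu <;> rcases hv with hv | hv
            · exact hTst u hu.1 v hv.1 hne hadj
            · have huK : u ∈ K := hKin u (hTUF hu.1).1 (hTUF hu.1).2 v hv.2 hadj
              exact hu.2 (hKuniq T hTst u hu.1 huK t htT htK)
            · have hvK : v ∈ K := hKin v (hTUF hv.1).1 (hTUF hv.1).2 u hu.2 hadj.symm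
              exact hv.2 (hKuniq T hTst v hv.1 hvK t htT htK)
            · exact hSst u hu.1 v hv.1 hne hadj
          have hdisj : Disjoint (T \ {t}) (S ∩ F) :=
            Set.disjoint_left.2 fun a ha haW => (hTUF ha.1).2 haW.2
          have hcard := hSmax _ (Set.union_subset (fun a ha => (hT ha.1).1)
            (fun w hw => hSU hw.1)) hstable
          rw [Set.ncard_union_eq hdisj (Set.toFinite _) (Set.toFinite _)] at hcard
          have htm : (T \ {t}).ncard + 1 = T.ncard :=
            Set.ncard_diff_singleton_add_one htT (Set.toFinite T)
          have htK₀ : t ∈ K₀ := ⟨htK, T, hTUF, hTst, by omega, htT⟩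
          exact (hT htT).2 (Or.inr htK₀)
      have hU'card : (U \ B).ncard ≤ n := by
        have hss : U \ B ⊂ U :=
          ⟨Set.diff_subset, fun hsub => ((hsub (hFU hf₀)) : f₀ ∈ U \ B).2 (Or.inl hf₀)⟩
        have := Set.ncard_lt_ncard hss (Set.toFinite U)
        omega
      obtain ⟨P'', hP''⟩ := ih (U \ B) (S \ B) hU'card hmax'
      obtain ⟨e, hene, hend, hech, hemem, helast⟩ := cover_path_ending hloc hw₀.2 hFstrong
      obtain ⟨ps, hflat, hprops⟩ := split_pieces (S ∩ F) A e hech hene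
        (fun x hx => by
          rw [helast] at hx
          simp only [Option.some.injEq] at hx
          rwa [← hx])
      cases ps with
      | nil =>
        exfalso
        apply hene
        rw [← hflat]
        rfl
      | cons p₁ rest =>
        have hp₁ne : p₁ ≠ [] := (hprops p₁ (by simp)).1
        have hflat' : p₁ ++ rest.flatten = e := by simpa using hflat
        have hflatqs : ((R ++ p₁) :: rest).flatten = R ++ e := by
          simp only [List.flatten_cons, List.append_assoc, hflat']
        have hRF : ∀ x ∈ R, x ∉ F := fun x hx hf => ((hRK₀ x).1 hx).1.2.1 hf
        have h2 : ((R ++ p₁) :: rest).flatten.Nodup := by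
          rw [hflatqs]
          exact List.Nodup.append hRnd hend (fun x hx hx' => hRF x hx ((hemem x).1 hx'))
        have h3 : ∀ x, x ∈ ((R ++ p₁) :: rest).flatten ↔ x ∈ B := by
          intro x
          rw [hflatqs, List.mem_append, hemem x, hRK₀ x, hBdef]
          rw [Set.mem_union]
          tauto
        have hp₁mem : ∀ x ∈ p₁, x ∈ F := by
          intro x hx
          refine (hemem x).1 ?_
          rw [← hflat]
          exact List.mem_flatten.2 ⟨p₁, by simp, hx⟩
        have hpmem : ∀ p ∈ rest, ∀ x ∈ p, x ∈ F := by
          intro p hp x hx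
          refine (hemem x).1 ?_
          rw [← hflat]
          exact List.mem_flatten.2 ⟨p, List.mem_cons_of_mem _ hp, hx⟩
        have h4 : ∀ p ∈ (R ++ p₁) :: rest, p ≠ [] ∧ p.Chain' A ∧ (∃! s, s ∈ p ∧ s ∈ S) := by
          intro p hp
          rcases List.mem_cons.1 hp with rfl | hp
          · obtain ⟨-, hp₁ch, hEx⟩ := hprops p₁ (by simp)
            obtain ⟨y, ⟨hy1, hy2⟩, hy3⟩ := hEx
            refine ⟨by simp [hp₁ne], ?_, ?_⟩
            · refine List.chain'_append.2 ⟨hRch, hp₁ch, ?_⟩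
              intro z hz y' hy'
              have hzK : z ∈ K := hK₀K ((hRK₀ z).1 (List.mem_of_mem_getLast? hz))
              exact hdomK z hzK y' (hp₁mem y' (List.mem_of_mem_head? hy'))
            · refine ⟨y, ⟨List.mem_append_right _ hy1, hy2.1⟩, ?_⟩
              rintro s' ⟨hs1', hs2'⟩
              rcases List.mem_append.1 hs1' with hs' | hs'
              · exact absurd (hK₀K ((hRK₀ s').1 hs')) (hSK s' hs2')
              · exact hy3 s' ⟨hs', hs2', hp₁mem s' hs'⟩
          · obtain ⟨hne', hch', hEx⟩ := hprops p (List.mem_cons_of_mem _ hp)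
            obtain ⟨y, ⟨hy1, hy2⟩, hy3⟩ := hEx
            refine ⟨hne', hch', y, ⟨hy1, hy2.1⟩, ?_⟩
            rintro s' ⟨hs1', hs2'⟩
            exact hy3 s' ⟨hs1', hs2', hpmem p hp s' hs1'⟩
        exact ⟨{l | l ∈ (R ++ p₁) :: rest} ∪ P'', glue hBU hP'' h2 h3 h4⟩
    · -- Case B : S misses the final component
      have hWe : ∀ s ∈ S, s ∉ F := by
        intro s hs hf
        exact hWne ⟨s, hs, hf⟩
      have hf₀S : f₀ ∉ S := fun h => hWe f₀ h hf₀
      obtain ⟨x, hxS, hxadj⟩ := hext f₀ (hFU hf₀) hf₀S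
      have hxK : x ∈ K := by
        rcases hxadj with h | h
        · exact absurd (hFfinal f₀ hf₀ x (hSU hxS) h) (hWe x hxS)
        · exact hKin x (hSU hxS) (hWe x hxS) f₀ hf₀ (Or.inl h)
      set K₀ := {t : V | t ∈ K ∧ ∃ T : Set V, T ⊆ U \ F ∧ IsStable A T ∧
        S.ncard ≤ T.ncard ∧ t ∈ T} with hK₀def
      have hK₀K : K₀ ⊆ K := fun t ht => ht.1
      have hSUF : S ⊆ U \ F := fun s hs => ⟨hSU hs, hWe s hs⟩
      have hxK₀ : x ∈ K₀ := ⟨hxK, S, hSUF, hSst, le_rfl, hxS⟩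
      obtain ⟨R, hRnd, hRch, hRmem⟩ := redei_finset (A := A) (Set.toFinite K₀).toFinset
        (by
          intro a ha b hb hne
          rw [Set.Finite.mem_toFinset] at ha hb
          exact hKadj a (hK₀K ha) b (hK₀K hb) hne)
      have hRK₀ : ∀ y, y ∈ R ↔ y ∈ K₀ := by
        intro y; rw [hRmem y, Set.Finite.mem_toFinset]
      set B := F ∪ K₀ with hBdef
      have hBU : B ⊆ U := Set.union_subset hFU (fun t ht => hKU (hK₀K ht))
      have hSdiffB : S \ B = S \ {x} := by
        ext s
        simp only [Set.mem_diff, hBdef, Set.mem_union, Set.mem_singleton_iff]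
        constructor
        · rintro ⟨hs, hnot⟩
          exact ⟨hs, fun he => hnot (Or.inr (he ▸ hxK₀))⟩
        · rintro ⟨hs, hne⟩
          refine ⟨hs, ?_⟩
          rintro (hf | hk)
          · exact hWe s hs hf
          · exact hne (hKuniq S hSst s hs (hK₀K hk) x hxS hxK)
      have hxcard : (S \ {x}).ncard + 1 = S.ncard :=
        Set.ncard_diff_singleton_add_one hxS (Set.toFinite S)
      have hmax' : MaxStableOn A (U \ B) (S \ B) := by
        refine ⟨fun s hs => ⟨hSU hs.1, hs.2⟩,
          fun u hu v hv hne hadj => hSst u hu.1 v hv.1 hne hadj, ?_⟩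
        intro T hT hTst
        rw [hSdiffB]
        by_contra hcon
        push_neg at hcon
        have hTUF : T ⊆ U \ F := fun t ht => ⟨(hT ht).1, fun hf => (hT ht).2 (Or.inl hf)⟩
        by_cases hTK : ∀ t ∈ T, t ∉ K
        · have hf₀T : f₀ ∉ T := fun h => (hTUF h).2 hf₀
          have hstable : IsStable A (insert f₀ T) := by
            intro u hu v hv hne hadj
            rcases Set.mem_insert_iff.1 hu with hue | huS
            · rcases Set.mem_insert_iff.1 hv with hve | hvS
              · exact hne (hue.trans hve.symm)
              · exact hTK v hvS (hKin v (hTUF hvS).1 (hTUF hvS).2 f₀ hf₀ (hue ▸ hadj).symm)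
            · rcases Set.mem_insert_iff.1 hv with hve | hvS
              · exact hTK u huS (hKin u (hTUF huS).1 (hTUF huS).2 f₀ hf₀ (hve ▸ hadj))
              · exact hTst u huS v hvS hne hadj
          have hcard := hSmax (insert f₀ T)
            (Set.insert_subset (hFU hf₀) (fun t ht => (hT ht).1)) hstable
          rw [Set.ncard_insert_of_notMem hf₀T (Set.toFinite T)] at hcard
          omega
        · push_neg at hTK
          obtain ⟨t, htT, htK⟩ := hTK
          have htK₀ : t ∈ K₀ := ⟨htK, T, hTUF, hTst, by omega, htT⟩
          exact (hT htT).2 (Or.inr htK₀)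
      have hU'card : (U \ B).ncard ≤ n := by
        have hss : U \ B ⊂ U :=
          ⟨Set.diff_subset, fun hsub => ((hsub (hFU hf₀)) : f₀ ∈ U \ B).2 (Or.inl hf₀)⟩
        have := Set.ncard_lt_ncard hss (Set.toFinite U)
        omega
      obtain ⟨P'', hP''⟩ := ih (U \ B) (S \ B) hU'card hmax'
      obtain ⟨e, hene, hend, hech, hemem, _⟩ := cover_path_ending hloc hf₀ hFstrong
      have hRF : ∀ y ∈ R, y ∉ F := fun y hy hf => ((hRK₀ y).1 hy).1.2.1 hf
      have h2 : ([R ++ e] : List (List V)).flatten.Nodup := by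
        simp only [List.flatten_cons, List.flatten_nil, List.append_nil]
        exact List.Nodup.append hRnd hend (fun y hy hy' => hRF y hy ((hemem y).1 hy'))
      have h3 : ∀ y, y ∈ ([R ++ e] : List (List V)).flatten ↔ y ∈ B := by
        intro y
        simp only [List.flatten_cons, List.flatten_nil, List.append_nil, List.mem_append,
          hemem y, hRK₀ y, hBdef, Set.mem_union]
        tauto
      have h4 : ∀ p ∈ ([R ++ e] : List (List V)), p ≠ [] ∧ p.Chain' A ∧
          (∃! s, s ∈ p ∧ s ∈ S) := by
        intro p hp
        rcases List.mem_cons.1 hp with rfl | hp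
        · refine ⟨by simp [hene], ?_, ?_⟩
          · refine List.chain'_append.2 ⟨hRch, hech, ?_⟩
            intro z hz y' hy'
            have hzK : z ∈ K := hK₀K ((hRK₀ z).1 (List.mem_of_mem_getLast? hz))
            exact hdomK z hzK y' ((hemem y').1 (List.mem_of_mem_head? hy'))
          · refine ⟨x, ⟨List.mem_append_left _ ((hRK₀ x).2 hxK₀), hxS⟩, ?_⟩
            rintro s' ⟨hs1', hs2'⟩
            rcases List.mem_append.1 hs1' with hs' | hs'
            · exact hKuniq S hSst s' hs2' (hK₀K ((hRK₀ s').1 hs')) x hxS hxK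
            · exact absurd ((hemem s').1 hs') (hWe s' hs2')
        · simp at hp
      exact ⟨{l | l ∈ ([R ++ e] : List (List V))} ∪ P'', glue hBU hP'' h2 h3 h4⟩

end Comp
end AlphaAux

namespace AlphaAux
section Transfer
variable {V : Type*} [Finite V] {A : V → V → Prop}

theorem alphaProperty_of_core (hloc : ∀ v u w : V, A u v → A w v → u ≠ w → A u w ∨ A w u)
    (W : Set V) : AlphaProperty (fun a b : W => A a.1 b.1) := by
  intro S' hS'
  set A' : W → W → Prop := fun a b => A a.1 b.1 with hA'
  obtain ⟨hS'st, hS'max⟩ := hS'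
  set S : Set V := Subtype.val '' S' with hSdef
  have hScard : S.ncard = S'.ncard := Set.ncard_image_of_injective S' Subtype.val_injective
  have hmax : MaxStableOn A W S := by
    refine ⟨?_, ?_, ?_⟩
    · rintro s ⟨a, haS, rfl⟩; exact a.2
    · rintro u ⟨a, haS, rfl⟩ v ⟨b, hbS, rfl⟩ hne hadj
      exact hS'st a haS b hbS (fun h => hne (by rw [h])) hadj
    · intro T hTW hTst
      set T' : Set W := {a : W | a.1 ∈ T} with hT'def
      have hT'st : IsStable A' T' := by
        intro a ha b hb hne hadj
        exact hTst a.1 ha b.1 hb (fun h => hne (Subtype.ext h)) hadj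
      have hTeq : T = Subtype.val '' T' := by
        ext x
        constructor
        · intro hx; exact ⟨⟨x, hTW hx⟩, hx, rfl⟩
        · rintro ⟨a, ha, rfl⟩; exact ha
      have := hS'max T' hT'st
      rw [hTeq, Set.ncard_image_of_injective T' Subtype.val_injective, hScard]
      exact this
    -- core
  obtain ⟨P, hgood⟩ := core hloc W.ncard W S le_rfl hmax
  obtain ⟨g1, g2, g3⟩ := hgood
  set lift : ∀ (l : List V), (∀ x ∈ l, x ∈ W) → List W := fun l hl =>
    l.attach.map (fun x => (⟨x.1, hl x.1 x.2⟩ : W)) with hliftdef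
  have hliftmap : ∀ (l : List V) (hl : ∀ x ∈ l, x ∈ W), (lift l hl).map Subtype.val = l := by
    intro l hl
    rw [hliftdef]
    simp only [List.map_map]
    exact List.attach_map_subtype_val l
  refine ⟨{m : List W | m.map Subtype.val ∈ P}, ⟨⟨?_, ?_⟩, ?_⟩⟩
  · intro m hm
    obtain ⟨hne, hnd, hch, _⟩ := g1 (m.map Subtype.val) hm
    refine ⟨fun h => hne (by rw [h]; rfl), hnd.of_map Subtype.val, ?_⟩
    exact (List.isChain_map Subtype.val).1 hch
  · intro v
    obtain ⟨l, ⟨hlP, hvl⟩, huniq⟩ := g2 v.1 v.2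
    have hlW : ∀ x ∈ l, x ∈ W := (g1 l hlP).2.2.2
    refine ⟨lift l hlW, ⟨by rw [Set.mem_setOf_eq, hliftmap]; exact hlP, ?_⟩, ?_⟩
    · have : v.1 ∈ (lift l hlW).map Subtype.val := by rw [hliftmap]; exact hvl
      obtain ⟨a, ham, hav⟩ := List.mem_map.1 this
      rwa [Subtype.ext hav] at ham
    · rintro m ⟨hmP, hvm⟩
      have h1 : m.map Subtype.val = l :=
        huniq (m.map Subtype.val) ⟨hmP, List.mem_map.2 ⟨v, hvm, rfl⟩⟩
      refine List.map_injective_iff.2 Subtype.val_injective ?_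
      rw [h1, hliftmap]
  · intro m hm
    obtain ⟨s, ⟨hsm, hsS⟩, hsu⟩ := g3 (m.map Subtype.val) hm
    obtain ⟨σ, hσm, hσs⟩ := List.mem_map.1 hsm
    obtain ⟨τ, hτS, hτs⟩ := hsS
    have hστ : σ = τ := Subtype.val_injective (by rw [hσs, hτs])
    refine ⟨σ, ⟨hσm, hστ ▸ hτS⟩, ?_⟩
    rintro σ' ⟨hσ'm, hσ'S⟩
    have := hsu σ'.1 ⟨List.mem_map.2 ⟨σ', hσ'm, rfl⟩, ⟨σ', hσ'S, rfl⟩⟩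
    exact Subtype.val_injective (by rw [this, hσs])

end Transfer
end AlphaAux

/-- Every locally in-semicomplete digraph is α-diperfect. -/
theorem locally_in_semicomplete_alphaDiperfect {V : Type*} [Finite V]
    (A : V → V → Prop) (hirr : ∀ v, ¬ A v v) (h : LocallyInSemicomplete A) :
    AlphaDiperfect A := fun W => AlphaAux.alphaProperty_of_core h W
end

section
/- In a locally in-semicomplete digraph D, if X and Y are distinct strong components and there exist x ∈ V(X), y ∈ V(Y) with arc xy, then x dominates every vertex of Y (for all z ∈ V(Y), xz is an arc and zx is not). -/
open Relation

variable {V : Type*}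

/-- In a locally in-semicomplete digraph, if there is an arc from a strong component `X`
to a different strong component `Y`, then its tail dominates every vertex of `Y`. -/
theorem locally_in_semicomplete_dominates {V : Type*} [Finite V] (A : V → V → Prop)
    (hirr : ∀ v, ¬ A v v) (h : LocallyInSemicomplete A) (X Y : Set V)
    (hX : IsStrongComponent A X) (hY : IsStrongComponent A Y) (hXY : X ≠ Y)
    (x y : V) (hx : x ∈ X) (hy : y ∈ Y) (hxy : A x y) :
    ∀ z ∈ Y, A x z ∧ ¬ A z x := by
  obtain ⟨hYne, hYmut, hYmax⟩ := hY
  obtain ⟨hXne, hXmut, hXmax⟩ := hX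
  have hxnY : x ∉ Y := by
    intro hxY
    apply hXY
    ext u
    exact ⟨fun hu => hYmax u x hxY (hXmut u hu x hx),
           fun hu => hXmax u x hx (hYmut u hu x hxY)⟩
  have hnzx : ∀ z ∈ Y, ¬ A z x := by
    intro z hz hzx
    exact hxnY (hYmax x z hz ⟨(ReflTransGen.single hxy).trans (hYmut y hy z hz).1,
      ReflTransGen.single hzx⟩)
  have key : ∀ w, ReflTransGen A w y → w ∈ Y → A x w := by
    intro w hwy
    induction hwy using Relation.ReflTransGen.head_induction_on with
    | refl => exact fun _ => hxy
    | @head a c hac hcy ih =>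
      intro haY
      have hcY : c ∈ Y := hYmax c y hy ⟨hcy, ((hYmut y hy a haY).1).tail hac⟩
      have hxc : A x c := ih hcY
      have hne : x ≠ a := fun he => hxnY (he ▸ haY)
      rcases h c x a hxc hac hne with h1 | h2
      · exact h1
      · exact absurd h2 (hnzx a haY)
  exact fun z hz => ⟨key z (hYmut z hz y hy).1 hz, hnzx z hz⟩
end

section
/- Let D be a digraph and S a maximum stable set of D. If every lonely arc of D having an endvertex in S leaves S (its tail is in S), then there exists an S-path partition P of D in which every path starts at its vertex of S. -/
open Relation

variable {V : Type*}

namespace GMaux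

variable {V : Type*}

def DAdj' (B : V → V → Prop) (u v : V) : Prop := B u v ∨ B v u

/-- `P` is a path partition (w.r.t. arc relation `B`) of the vertex set `s`. -/
def PDisj (B : V → V → Prop) (P : Finset (List V)) (s : Finset V) : Prop :=
  (∀ l ∈ P, l ≠ [] ∧ l.Nodup ∧ l.Chain' B) ∧
  (∀ l ∈ P, ∀ m ∈ P, l ≠ m → ∀ v ∈ l, v ∉ m) ∧
  (∀ v : V, v ∈ s ↔ ∃ l ∈ P, v ∈ l)

/-- terminal vertices -/
def terS (P : Finset (List V)) : Set (Option V) := List.getLast? '' (P : Set (List V))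

lemma mem_terS {P : Finset (List V)} {l : List V} (h : l ∈ P) : l.getLast? ∈ terS P :=
  ⟨l, h, rfl⟩

lemma terS_finite (P : Finset (List V)) : (terS P).Finite :=
  (P.finite_toSet).image _

variable {B : V → V → Prop} {P Q' : Finset (List V)} {s s' : Finset V} {t1 : V}

lemma mem_s_of_mem_path (hP : PDisj B P s) {l : List V} (hl : l ∈ P) {v : V} (hv : v ∈ l) :
    v ∈ s := (hP.2.2 v).2 ⟨l, hl, hv⟩

lemma erase_singleton_partition [DecidableEq (List V)] [DecidableEq V]
    (hP : PDisj B P s) (hp1 : [t1] ∈ P) :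
    PDisj B (P.erase [t1]) (s.erase t1) := by
  obtain ⟨hpaths, hdisj, hcov⟩ := hP
  refine ⟨fun l hl => hpaths l (Finset.mem_of_mem_erase hl), ?_, ?_⟩
  · intro l hl m hm
    exact hdisj l (Finset.mem_of_mem_erase hl) m (Finset.mem_of_mem_erase hm)
  · intro v
    constructor
    · intro hv
      rw [Finset.mem_erase] at hv
      obtain ⟨l, hl, hvl⟩ := (hcov v).1 hv.2
      refine ⟨l, Finset.mem_erase.2 ⟨?_, hl⟩, hvl⟩
      intro heq
      rw [heq, List.mem_singleton] at hvl
      exact hv.1 hvl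
    · rintro ⟨l, hl, hvl⟩
      rw [Finset.mem_erase] at hl
      refine Finset.mem_erase.2 ⟨?_, (hcov v).2 ⟨l, hl.2, hvl⟩⟩
      intro heq
      exact hdisj l hl.2 [t1] hp1 hl.1 v hvl (by simp [heq])

lemma droplast_partition [DecidableEq (List V)] [DecidableEq V]
    {p1 q : List V} (hP : PDisj B P s) (hp1 : p1 ∈ P) (hq : q ≠ [])
    (hcat : p1 = q ++ [t1]) :
    PDisj B (insert q (P.erase p1)) (s.erase t1) := by
  obtain ⟨hpaths, hdisj, hcov⟩ := hP
  obtain ⟨hp1ne, hp1nodup, hp1chain⟩ := hpaths p1 hp1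
  have hqsub : ∀ x ∈ q, x ∈ p1 := by intro x hx; rw [hcat]; exact List.mem_append_left _ hx
  have ht1p1 : t1 ∈ p1 := by rw [hcat]; simp
  have ht1q : t1 ∉ q := by
    rw [hcat, List.nodup_append] at hp1nodup
    intro h
    exact hp1nodup.2.2 t1 h t1 (by simp) rfl
  have hqnodup : q.Nodup := by rw [hcat, List.nodup_append] at hp1nodup; exact hp1nodup.1
  have hqchain : q.Chain' B := by
    rw [hcat, List.Chain', List.isChain_append] at hp1chain; exact hp1chain.1
  refine ⟨?_, ?_, ?_⟩
  · intro l hl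
    rcases Finset.mem_insert.1 hl with heq | hl
    · subst l; exact ⟨hq, hqnodup, hqchain⟩
    · exact hpaths l (Finset.mem_of_mem_erase hl)
  · intro l hl m hm hlm v hvl
    rcases Finset.mem_insert.1 hl with heql | hl <;> rcases Finset.mem_insert.1 hm with heqm | hm
    · subst l; subst m; exact absurd rfl hlm
    · subst l
      rw [Finset.mem_erase] at hm
      exact hdisj p1 hp1 m hm.2 (Ne.symm hm.1) v (hqsub v hvl)
    · subst m
      rw [Finset.mem_erase] at hl
      intro hvm
      exact hdisj l hl.2 p1 hp1 hl.1 v hvl (hqsub v hvm)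
    · rw [Finset.mem_erase] at hl hm
      exact hdisj l hl.2 m hm.2 hlm v hvl
  · intro v
    constructor
    · intro hv
      rw [Finset.mem_erase] at hv
      obtain ⟨l, hl, hvl⟩ := (hcov v).1 hv.2
      by_cases h : l = p1
      · subst l
        rw [hcat, List.mem_append] at hvl
        rcases hvl with h | h
        · exact ⟨q, Finset.mem_insert_self _ _, h⟩
        · simp only [List.mem_singleton] at h; exact absurd h hv.1
      · exact ⟨l, Finset.mem_insert_of_mem (Finset.mem_erase.2 ⟨h, hl⟩), hvl⟩
    · rintro ⟨l, hl, hvl⟩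
      rcases Finset.mem_insert.1 hl with heq | hl
      · subst l
        refine Finset.mem_erase.2 ⟨?_, (hcov v).2 ⟨p1, hp1, hqsub v hvl⟩⟩
        intro heq
        rw [heq] at hvl
        exact ht1q hvl
      · rw [Finset.mem_erase] at hl
        refine Finset.mem_erase.2 ⟨?_, (hcov v).2 ⟨l, hl.2, hvl⟩⟩
        intro heq
        rw [heq] at hvl
        exact hdisj p1 hp1 l hl.2 (Ne.symm hl.1) t1 ht1p1 hvl

lemma extend_partition [DecidableEq (List V)] [DecidableEq V]
    (hQ' : PDisj B Q' s') (ht1 : t1 ∉ s') {r : List V} {w : V}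
    (hr : r ∈ Q') (hw : r.getLast? = some w) (hB : B w t1) :
    PDisj B (insert (r ++ [t1]) (Q'.erase r)) (insert t1 s') := by
  obtain ⟨hpaths, hdisj, hcov⟩ := hQ'
  obtain ⟨hrne, hrnodup, hrchain⟩ := hpaths r hr
  have hsub : ∀ m ∈ Q', ∀ x ∈ m, x ∈ s' := fun m hm x hx => (hcov x).2 ⟨m, hm, hx⟩
  have ht1r : t1 ∉ r := fun h => ht1 (hsub r hr t1 h)
  refine ⟨?_, ?_, ?_⟩
  · intro l hl
    rcases Finset.mem_insert.1 hl with heq | hl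
    · subst l
      refine ⟨by simp, ?_, ?_⟩
      · rw [List.nodup_append]
        refine ⟨hrnodup, List.nodup_singleton _, ?_⟩
        intro a ha b hb hab
        simp only [List.mem_singleton] at hb
        rw [hab, hb] at ha
        exact ht1r ha
      · rw [List.Chain', List.isChain_append]
        refine ⟨hrchain, List.isChain_singleton _, ?_⟩
        intro x hx y hy
        rw [hw] at hx
        simp only [List.head?, Option.mem_def, Option.some.injEq] at hx hy
        rw [← hx, ← hy]; exact hB
    · exact hpaths l (Finset.mem_of_mem_erase hl)
  · intro l hl m hm hlm v hvl
    rcases Finset.mem_insert.1 hl with heql | hl <;> rcases Finset.mem_insert.1 hm with heqm | hm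
    · subst l; subst m; exact absurd rfl hlm
    · subst l
      rw [Finset.mem_erase] at hm
      rw [List.mem_append] at hvl
      rcases hvl with h | h
      · exact hdisj r hr m hm.2 (Ne.symm hm.1) v h
      · simp only [List.mem_singleton] at h
        rw [h]
        exact fun hc => ht1 (hsub m hm.2 t1 hc)
    · subst m
      rw [Finset.mem_erase] at hl
      intro hvm
      rw [List.mem_append] at hvm
      rcases hvm with h | h
      · exact hdisj l hl.2 r hr hl.1 v hvl h
      · rw [List.mem_singleton] at h
        rw [h] at hvl
        exact ht1 (hsub l hl.2 t1 hvl)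
    · rw [Finset.mem_erase] at hl hm
      exact hdisj l hl.2 m hm.2 hlm v hvl
  · intro v
    constructor
    · intro hv
      rcases Finset.mem_insert.1 hv with heq | hv
      · exact ⟨r ++ [t1], Finset.mem_insert_self _ _, by simp [heq]⟩
      · obtain ⟨l, hl, hvl⟩ := (hcov v).1 hv
        by_cases h : l = r
        · subst l
          exact ⟨r ++ [t1], Finset.mem_insert_self _ _, List.mem_append_left _ hvl⟩
        · exact ⟨l, Finset.mem_insert_of_mem (Finset.mem_erase.2 ⟨h, hl⟩), hvl⟩
    · rintro ⟨l, hl, hvl⟩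
      rcases Finset.mem_insert.1 hl with heq | hl
      · subst l
        rw [List.mem_append] at hvl
        rcases hvl with h | h
        · exact Finset.mem_insert_of_mem (hsub r hr v h)
        · rw [List.mem_singleton] at h
          rw [h]; exact Finset.mem_insert_self _ _
      · rw [Finset.mem_erase] at hl
        exact Finset.mem_insert_of_mem (hsub l hl.2 v hvl)

lemma insert_singleton_partition [DecidableEq (List V)] [DecidableEq V]
    (hQ' : PDisj B Q' s') (ht1 : t1 ∉ s') :
    PDisj B (insert [t1] Q') (insert t1 s') := by
  obtain ⟨hpaths, hdisj, hcov⟩ := hQ'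
  have hsub : ∀ m ∈ Q', ∀ x ∈ m, x ∈ s' := fun m hm x hx => (hcov x).2 ⟨m, hm, hx⟩
  refine ⟨?_, ?_, ?_⟩
  · intro l hl
    rcases Finset.mem_insert.1 hl with heq | hl
    · subst l; exact ⟨by simp, List.nodup_singleton _, List.isChain_singleton _⟩
    · exact hpaths l hl
  · intro l hl m hm hlm v hvl
    rcases Finset.mem_insert.1 hl with heql | hl <;> rcases Finset.mem_insert.1 hm with heqm | hm
    · subst l; subst m; exact absurd rfl hlm
    · subst l
      rw [List.mem_singleton] at hvl
      rw [hvl]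
      exact fun hc => ht1 (hsub m hm t1 hc)
    · subst m
      intro hvm
      rw [List.mem_singleton] at hvm
      rw [hvm] at hvl
      exact ht1 (hsub l hl t1 hvl)
    · exact hdisj l hl m hm hlm v hvl
  · intro v
    constructor
    · intro hv
      rcases Finset.mem_insert.1 hv with heq | hv
      · exact ⟨[t1], Finset.mem_insert_self _ _, by simp [heq]⟩
      · obtain ⟨l, hl, hvl⟩ := (hcov v).1 hv
        exact ⟨l, Finset.mem_insert_of_mem hl, hvl⟩
    · rintro ⟨l, hl, hvl⟩
      rcases Finset.mem_insert.1 hl with heq | hl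
      · subst l
        rw [List.mem_singleton] at hvl
        rw [hvl]; exact Finset.mem_insert_self _ _
      · exact Finset.mem_insert_of_mem (hsub l hl v hvl)

end GMaux

namespace GMaux

variable {V : Type*} {B : V → V → Prop}

lemma mem_of_getLast?' {l : List V} {a : V} (h : l.getLast? = some a) : a ∈ l := by
  obtain ⟨hne, heq⟩ := List.mem_getLast?_eq_getLast (x := a) (l := l) (by rw [Option.mem_def, h])
  rw [heq]
  exact List.getLast_mem hne

lemma terS_insert [DecidableEq (List V)] (a : List V) (F : Finset (List V)) :
    terS (insert a F) = insert a.getLast? (terS F) := by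
  rw [terS, Finset.coe_insert, Set.image_insert_eq]; rfl

lemma terS_erase_subset [DecidableEq (List V)] (a : List V) (F : Finset (List V)) :
    terS (F.erase a) ⊆ terS F :=
  Set.image_mono (Finset.coe_subset.2 (Finset.erase_subset _ _))

lemma gm_key [DecidableEq (List V)] [DecidableEq V] (B : V → V → Prop) :
    ∀ n : ℕ, ∀ s : Finset V, s.card ≤ n → ∀ P : Finset (List V), PDisj B P s →
    (∀ Q, PDisj B Q s → ¬ (terS Q ⊂ terS P)) →
    ∃ t : {l // l ∈ P} → V, (∀ l, t l ∈ l.1) ∧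
      ∀ l m : {l // l ∈ P}, l.1 ≠ m.1 → ¬ DAdj' B (t l) (t m) := by
  intro n
  induction n with
  | zero =>
    intro s hs P hP _
    have hPe : ∀ l, l ∉ P := by
      intro l hl
      obtain ⟨v, hv⟩ := List.exists_mem_of_ne_nil l (hP.1 l hl).1
      have hvs := mem_s_of_mem_path hP hl hv
      rw [Finset.card_eq_zero.1 (Nat.le_zero.1 hs)] at hvs
      exact absurd hvs (Finset.notMem_empty v)
    exact ⟨fun l => absurd l.2 (hPe l.1), fun l => absurd l.2 (hPe l.1),
      fun l => absurd l.2 (hPe l.1)⟩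
  | succ n ih =>
    intro s hs P hP hmin
    by_cases hadj : ∃ p1 ∈ P, ∃ p2 ∈ P, ∃ a b : V, p1 ≠ p2 ∧
        p1.getLast? = some a ∧ p2.getLast? = some b ∧ B b a
    · obtain ⟨p1, hp1, p2, hp2, t1, t2, hne12, hlast1, hlast2, hB21⟩ := hadj
      have hp1ne : p1 ≠ [] := (hP.1 p1 hp1).1
      have ht1p1 : t1 ∈ p1 := mem_of_getLast?' hlast1
      have ht2p2 : t2 ∈ p2 := mem_of_getLast?' hlast2
      have ht1t2 : some t2 ≠ some t1 := by
        intro h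
        rw [Option.some.injEq] at h
        exact hP.2.1 p1 hp1 p2 hp2 hne12 t1 ht1p1 (h ▸ ht2p2)
      have ht1s : t1 ∈ s := mem_s_of_mem_path hP hp1 ht1p1
      have ht1notE : t1 ∉ s.erase t1 := Finset.notMem_erase _ _
      have hsomet1P : some t1 ∈ terS P := hlast1 ▸ mem_terS hp1
      have hsomet2P : some t2 ∈ terS P := hlast2 ▸ mem_terS hp2
      have hnott1 : some t1 ∉ terS (P.erase p1) := by
        rintro ⟨m, hm, hmeq⟩
        rw [Finset.mem_coe, Finset.mem_erase] at hm
        exact hP.2.1 m hm.2 p1 hp1 hm.1 t1 (mem_of_getLast?' hmeq) ht1p1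
      by_cases hsing : p1 = [t1]
      · exfalso
        subst p1
        have hp2' : p2 ∈ P.erase [t1] := Finset.mem_erase.2 ⟨Ne.symm hne12, hp2⟩
        have hQ := extend_partition (erase_singleton_partition hP hp1) ht1notE hp2'
          hlast2 hB21
        rw [Finset.insert_erase ht1s] at hQ
        apply hmin _ hQ
        rw [terS_insert, List.getLast?_concat]
        have hsub1 : insert (some t1) (terS ((P.erase [t1]).erase p2)) ⊆ terS P := by
          refine Set.insert_subset hsomet1P ?_
          exact ((terS_erase_subset _ _).trans (terS_erase_subset _ _))
        refine (Set.ssubset_iff_of_subset hsub1).2 ⟨some t2, hsomet2P, ?_⟩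
        intro hmem
        rcases Set.mem_insert_iff.1 hmem with heq | hmem2
        · exact ht1t2 heq
        · obtain ⟨m, hm, hmeq⟩ := hmem2
          rw [Finset.mem_coe, Finset.mem_erase] at hm
          exact hP.2.1 m (Finset.mem_of_mem_erase hm.2) p2 hp2 hm.1 t2
            (mem_of_getLast?' hmeq) ht2p2
      · -- main case: p1 = q ++ [t1] with q ≠ []
        have hcat : p1 = p1.dropLast ++ [t1] := by
          have h1 := List.dropLast_append_getLast hp1ne
          have h2 : p1.getLast hp1ne = t1 := by
            have h3 := List.getLast?_eq_getLast_of_ne_nil hp1ne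
            rw [hlast1, Option.some.injEq] at h3
            exact h3.symm
          rw [← h2]; exact h1.symm
        set q := p1.dropLast with hqdef
        have hq : q ≠ [] := by
          intro h
          apply hsing
          rw [hcat, h, List.nil_append]
        have hlastq : q.getLast? = some (q.getLast hq) :=
          List.getLast?_eq_getLast_of_ne_nil hq
        set v := q.getLast hq with hvdef
        have hvq : v ∈ q := List.getLast_mem hq
        have hvp1 : v ∈ p1 := by rw [hcat]; exact List.mem_append_left _ hvq
        have hBvt1 : B v t1 := by
          have hch := (hP.1 p1 hp1).2.2
          rw [hcat, List.Chain', List.isChain_append] at hch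
          exact hch.2.2 v hlastq t1 rfl
        have hP' := droplast_partition hP hp1 hq hcat
        have hscard : (s.erase t1).card ≤ n := by
          rw [Finset.card_erase_of_mem ht1s]
          omega
        have hterP' : terS (insert q (P.erase p1)) = insert (some v) (terS (P.erase p1)) := by
          rw [terS_insert, hlastq]
        have hvnotP1 : ∀ m ∈ P.erase p1, v ∉ m := by
          intro m hm
          rw [Finset.mem_erase] at hm
          exact hP.2.1 p1 hp1 m hm.2 (Ne.symm hm.1) v hvp1
        have hmin' : ∀ Q', PDisj B Q' (s.erase t1) →
            ¬ terS Q' ⊂ terS (insert q (P.erase p1)) := by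
          intro Q' hQ' hss
          obtain ⟨e, heP', heQ'⟩ := Set.exists_of_ssubset hss
          have hsubQ' : ∀ x ∈ terS Q', x ≠ some v → x ∈ terS (P.erase p1) := by
            intro x hx hxv
            have := hss.1 hx
            rw [hterP'] at this
            rcases Set.mem_insert_iff.1 this with h | h
            · exact absurd h hxv
            · exact h
          have hQ'nott1 : ∀ r ∈ Q', ∀ x ∈ r, x ≠ t1 := by
            intro r hr x hx heq
            have := mem_s_of_mem_path hQ' hr hx
            rw [heq] at this
            exact ht1notE this
          by_cases hva : some v ∈ terS Q'
          · obtain ⟨r, hrmem, hrlast⟩ := hva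
            rw [Finset.mem_coe] at hrmem
            have hva' : some v ∈ terS Q' := ⟨r, hrmem, hrlast⟩
            have hvr : v ∈ r := mem_of_getLast?' hrlast
            have hQ := extend_partition hQ' ht1notE hrmem hrlast hBvt1
            rw [Finset.insert_erase ht1s] at hQ
            apply hmin _ hQ
            rw [terS_insert, List.getLast?_concat]
            have heP'' : e ∈ terS (P.erase p1) := by
              rw [hterP'] at heP'
              rcases Set.mem_insert_iff.1 heP' with heq | h
              · exact absurd (heq ▸ hva') heQ'
              · exact h
            have hsub1 : insert (some t1) (terS (Q'.erase r)) ⊆ terS P := by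
              refine Set.insert_subset hsomet1P ?_
              intro x hx
              obtain ⟨m, hm, hmeq⟩ := hx
              rw [Finset.mem_coe, Finset.mem_erase] at hm
              have hxQ' : x ∈ terS Q' := ⟨m, hm.2, hmeq⟩
              have hxv : x ≠ some v := by
                intro heq
                rw [heq] at hmeq
                exact hQ'.2.1 m hm.2 r hrmem hm.1 v (mem_of_getLast?' hmeq) hvr
              exact (terS_erase_subset p1 P) (hsubQ' x hxQ' hxv)
            refine (Set.ssubset_iff_of_subset hsub1).2 ⟨e, ?_, ?_⟩
            · exact (terS_erase_subset p1 P) heP''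
            · intro hmem
              rcases Set.mem_insert_iff.1 hmem with heq | hmem2
              · rw [heq] at heP''
                exact hnott1 heP''
              · exact heQ' ((terS_erase_subset r Q') hmem2)
          · by_cases hvb : some t2 ∈ terS Q'
            · obtain ⟨r, hrmem, hrlast⟩ := hvb
              rw [Finset.mem_coe] at hrmem
              have ht2r : t2 ∈ r := mem_of_getLast?' hrlast
              have hQ := extend_partition hQ' ht1notE hrmem hrlast hB21
              rw [Finset.insert_erase ht1s] at hQ
              apply hmin _ hQ
              rw [terS_insert, List.getLast?_concat]
              have hsub1 : insert (some t1) (terS (Q'.erase r)) ⊆ terS P := by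
                refine Set.insert_subset hsomet1P ?_
                intro x hx
                have hxQ' : x ∈ terS Q' := (terS_erase_subset r Q') hx
                have hxv : x ≠ some v := fun heq => hva (heq ▸ hxQ')
                exact (terS_erase_subset p1 P) (hsubQ' x hxQ' hxv)
              refine (Set.ssubset_iff_of_subset hsub1).2 ⟨some t2, hsomet2P, ?_⟩
              intro hmem
              rcases Set.mem_insert_iff.1 hmem with heq | hmem2
              · exact ht1t2 heq
              · obtain ⟨m, hm, hmeq⟩ := hmem2
                rw [Finset.mem_coe, Finset.mem_erase] at hm
                exact hQ'.2.1 m hm.2 r hrmem hm.1 t2 (mem_of_getLast?' hmeq) ht2r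
            · have hQ := insert_singleton_partition hQ' ht1notE
              rw [Finset.insert_erase ht1s] at hQ
              apply hmin _ hQ
              rw [terS_insert]
              have hl1 : List.getLast? [t1] = some t1 := rfl
              rw [hl1]
              have hsub1 : insert (some t1) (terS Q') ⊆ terS P := by
                refine Set.insert_subset hsomet1P ?_
                intro x hx
                have hxv : x ≠ some v := fun heq => hva (heq ▸ hx)
                exact (terS_erase_subset p1 P) (hsubQ' x hx hxv)
              refine (Set.ssubset_iff_of_subset hsub1).2 ⟨some t2, hsomet2P, ?_⟩
              intro hmem
              rcases Set.mem_insert_iff.1 hmem with heq | hmem2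
              · exact ht1t2 heq
              · exact hvb hmem2
        obtain ⟨t', ht'mem, ht'adj⟩ := ih (s.erase t1) hscard _ hP' hmin'
        have hqP' : q ∈ insert q (P.erase p1) := Finset.mem_insert_self _ _
        have hqsubp1 : ∀ x ∈ q, x ∈ p1 := by
          intro x hx
          rw [hcat]; exact List.mem_append_left _ hx
        refine ⟨fun l => if h : l.1 = p1 then t' ⟨q, hqP'⟩
          else t' ⟨l.1, Finset.mem_insert_of_mem (Finset.mem_erase.2 ⟨h, l.2⟩)⟩, ?_, ?_⟩
        · intro l
          by_cases h : l.1 = p1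
          · simp only [dif_pos h, h]
            exact hqsubp1 _ (ht'mem ⟨q, hqP'⟩)
          · simp only [dif_neg h]
            exact ht'mem _
        · intro l m hlm
          have hqnem : ∀ (m : {l // l ∈ P}), ¬ m.1 = p1 → q ≠ m.1 := by
            intro m hm heq
            have : v ∈ m.1 := heq ▸ hvq
            exact hP.2.1 p1 hp1 m.1 m.2 (fun h => hm h.symm) v hvp1 this
          by_cases hl : l.1 = p1 <;> by_cases hm : m.1 = p1
          · exact absurd (hl.trans hm.symm) hlm
          · simp only [dif_pos hl, dif_neg hm]
            exact ht'adj ⟨q, hqP'⟩ ⟨m.1, _⟩ (hqnem m hm)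
          · simp only [dif_neg hl, dif_pos hm]
            exact ht'adj ⟨l.1, _⟩ ⟨q, hqP'⟩ (Ne.symm (hqnem l hl))
          · simp only [dif_neg hl, dif_neg hm]
            exact ht'adj ⟨l.1, _⟩ ⟨m.1, _⟩ hlm
    · refine ⟨fun l => l.1.getLast (hP.1 l.1 l.2).1, fun l => List.getLast_mem _, ?_⟩
      intro l m hlm hd
      rcases hd with h | h
      · exact hadj ⟨m.1, m.2, l.1, l.2, m.1.getLast (hP.1 m.1 m.2).1,
          l.1.getLast (hP.1 l.1 l.2).1, Ne.symm hlm,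
          List.getLast?_eq_getLast_of_ne_nil _, List.getLast?_eq_getLast_of_ne_nil _, h⟩
      · exact hadj ⟨l.1, l.2, m.1, m.2, l.1.getLast (hP.1 l.1 l.2).1,
          m.1.getLast (hP.1 m.1 m.2).1, hlm,
          List.getLast?_eq_getLast_of_ne_nil _, List.getLast?_eq_getLast_of_ne_nil _, h⟩

end GMaux

namespace GMaux

variable {V : Type*}

lemma gm_exists [DecidableEq (List V)] [DecidableEq V] (B : V → V → Prop) (s : Finset V) :
    ∃ P : Finset (List V), PDisj B P s ∧
      ∃ t : {l // l ∈ P} → V, (∀ l, t l ∈ l.1) ∧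
        ∀ l m : {l // l ∈ P}, l.1 ≠ m.1 → ¬ DAdj' B (t l) (t m) := by
  classical
  have hP0 : PDisj B (s.image (fun v => [v])) s := by
    refine ⟨?_, ?_, ?_⟩
    · intro l hl
      obtain ⟨v, hv, heq⟩ := Finset.mem_image.1 hl
      rw [← heq]
      exact ⟨by simp, List.nodup_singleton _, List.isChain_singleton _⟩
    · intro l hl m hm hlm x hxl hxm
      obtain ⟨v, hv, heqv⟩ := Finset.mem_image.1 hl
      obtain ⟨w, hw, heqw⟩ := Finset.mem_image.1 hm
      rw [← heqv, List.mem_singleton] at hxl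
      rw [← heqw, List.mem_singleton] at hxm
      apply hlm
      rw [← heqv, ← heqw, ← hxl, ← hxm]
    · intro v
      constructor
      · intro hv
        exact ⟨[v], Finset.mem_image_of_mem _ hv, by simp⟩
      · rintro ⟨l, hl, hvl⟩
        obtain ⟨w, hw, heq⟩ := Finset.mem_image.1 hl
        rw [← heq, List.mem_singleton] at hvl
        rw [hvl]; exact hw
  have hN : {k | ∃ P, PDisj B P s ∧ (terS P).ncard = k}.Nonempty := ⟨_, _, hP0, rfl⟩
  obtain ⟨P, hPd, hcardP⟩ := Nat.sInf_mem hN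
  have hmin : ∀ Q, PDisj B Q s → ¬ terS Q ⊂ terS P := by
    intro Q hQ hss
    have h1 : (terS Q).ncard < (terS P).ncard := Set.ncard_lt_ncard hss (terS_finite P)
    have h2 : sInf {k | ∃ P, PDisj B P s ∧ (terS P).ncard = k} ≤ (terS Q).ncard :=
      Nat.sInf_le ⟨Q, hQ, rfl⟩
    omega
  exact ⟨P, hPd, gm_key B s.card s le_rfl P hPd hmin⟩

lemma head_of_mem_chain' {S : Set V} {B : V → V → Prop} (hB : ∀ u v, B u v → v ∉ S) :
    ∀ l : List V, l.Chain' B → ∀ x ∈ l, x ∈ S → l.head? = some x := by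
  intro l
  induction l with
  | nil => intro _ x hx; simp at hx
  | cons a l' ihl =>
    intro hch x hx hxS
    rcases List.mem_cons.1 hx with heq | hx'
    · simp [heq]
    · exfalso
      have hhx : l'.head? = some x := ihl hch.tail x hx' hxS
      have hBax : B a x := by
        cases l' with
        | nil => simp at hhx
        | cons b l'' =>
          have hb : b = x := by simpa using hhx
          have := (List.isChain_cons_cons.1 hch).1
          rw [hb] at this
          exact this
      exact (hB a x hBax) hxS

end GMaux

/-- If every lonely arc of `D` with an endvertex in a maximum stable set `S` leaves `S`,
then there is an `S`-path partition in which every path starts at its vertex of `S`. -/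
theorem lonely_leaving_S_partition {V : Type*} [Finite V] (A : V → V → Prop)
    (hirr : ∀ v, ¬ A v v) (S : Set V) (hS : IsMaxStable A S)
    (hlonely : ∀ u v : V, A u v → ¬ A v u → (u ∈ S ∨ v ∈ S) → u ∈ S) :
    ∃ P : Set (List V), IsSPartition A S P ∧
      ∀ l ∈ P, ∀ s ∈ l, s ∈ S → l.head? = some s := by
  classical
  have _finst : Fintype V := Fintype.ofFinite V
  set B : V → V → Prop := fun u v => A u v ∧ v ∉ S with hBdef
  obtain ⟨P, hPd, t, htmem, htadj⟩ := GMaux.gm_exists B Finset.univ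
  obtain ⟨hpaths, hdisj, hcov⟩ := hPd
  have hcov' : ∀ v : V, ∃ l ∈ P, v ∈ l := fun v => (hcov v).1 (Finset.mem_univ v)
  have hBS : ∀ u v : V, B u v → v ∉ S := fun u v h => h.2
  have hhead : ∀ l ∈ P, ∀ x ∈ l, x ∈ S → l.head? = some x := by
    intro l hl x hx hxS
    exact GMaux.head_of_mem_chain' hBS l (hpaths l hl).2.2 x hx hxS
  have hDA : ∀ u w : V, u ≠ w → DAdj A u w → GMaux.DAdj' B u w := by
    intro u w hne h
    rcases h with h | h
    · by_cases hw : w ∈ S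
      · have hu : u ∉ S := fun hu => hS.1 u hu w hw hne (Or.inl h)
        have haw : A w u := by
          by_contra hnaw
          exact hu (hlonely u w h hnaw (Or.inr hw))
        exact Or.inr ⟨haw, hu⟩
      · exact Or.inl ⟨h, hw⟩
    · by_cases hu : u ∈ S
      · have hw : w ∉ S := fun hw => hS.1 u hu w hw hne (Or.inr h)
        have hauw : A u w := by
          by_contra hn
          exact hw (hlonely w u h hn (Or.inr hu))
        exact Or.inl ⟨hauw, hw⟩
      · exact Or.inr ⟨h, hu⟩
  have hstab : IsStable A (Set.range t) := by
    rintro x ⟨l, rfl⟩ y ⟨m, rfl⟩ hxy hadj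
    have hlm : l.1 ≠ m.1 := by
      intro heq
      exact hxy (congrArg t (Subtype.ext heq))
    exact htadj l m hlm (hDA _ _ hxy hadj)
  have htinj : Function.Injective t := by
    intro l m heq
    by_contra hne
    have hlm : l.1 ≠ m.1 := fun h => hne (Subtype.ext h)
    exact hdisj l.1 l.2 m.1 m.2 hlm (t l) (htmem l) (heq ▸ htmem m)
  have hcard1 : P.card ≤ S.ncard := by
    have h1 : (Set.range t).ncard ≤ S.ncard := hS.2 _ hstab
    have h2 : (Set.range t).ncard = P.card := by
      rw [← Nat.card_coe_set_eq, Nat.card_range_of_injective htinj,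
        Nat.card_eq_fintype_card, Fintype.card_coe]
    rw [h2] at h1
    exact h1
  have hchoice : ∀ x : {x : V // x ∈ S}, ∃ l : {l // l ∈ P}, x.1 ∈ l.1 := by
    intro x
    obtain ⟨l, hl, hx⟩ := hcov' x.1
    exact ⟨⟨l, hl⟩, hx⟩
  choose σ hσ using hchoice
  have hσinj : Function.Injective σ := by
    intro x y heq
    have h1 := hhead (σ x).1 (σ x).2 x.1 (hσ x) x.2
    have h2' := hσ y
    rw [← heq] at h2'
    have h2 := hhead (σ x).1 (σ x).2 y.1 h2' y.2
    apply Subtype.ext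
    rw [h1] at h2
    exact Option.some_injective _ h2
  have hcardP : Nat.card {l // l ∈ P} = P.card := by
    rw [Nat.card_eq_fintype_card, Fintype.card_coe]
  have hcardS : Nat.card {x : V // x ∈ S} = S.ncard := Nat.card_coe_set_eq S
  have hle2 : S.ncard ≤ P.card := by
    have := Nat.card_le_card_of_injective σ hσinj
    rwa [hcardS, hcardP] at this
  have hσsurj : Function.Surjective σ := by
    have hcards : Nat.card {x : V // x ∈ S} = Nat.card {l // l ∈ P} := by
      rw [hcardS, hcardP]; omega
    exact ((Nat.bijective_iff_injective_and_card σ).2 ⟨hσinj, hcards⟩).2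
  refine ⟨(P : Set (List V)), ⟨⟨?_, ?_⟩, ?_⟩, ?_⟩
  · intro l hl
    rw [Finset.mem_coe] at hl
    exact ⟨(hpaths l hl).1, (hpaths l hl).2.1,
      (hpaths l hl).2.2.imp (fun a b h => h.1)⟩
  · intro v
    obtain ⟨l, hl, hvl⟩ := hcov' v
    refine ⟨l, ⟨hl, hvl⟩, ?_⟩
    rintro m ⟨hm, hvm⟩
    by_contra hne
    exact hdisj m (Finset.mem_coe.1 hm) l hl hne v hvm hvl
  · intro l hl
    rw [Finset.mem_coe] at hl
    obtain ⟨x, hx⟩ := hσsurj ⟨l, hl⟩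
    have hxl : x.1 ∈ l := by
      have := hσ x
      rw [hx] at this
      exact this
    refine ⟨x.1, ⟨hxl, x.2⟩, ?_⟩
    rintro y ⟨hyl, hyS⟩
    have h1 := hhead l hl y hyl hyS
    have h2 := hhead l hl x.1 hxl x.2
    rw [h1] at h2
    exact Option.some_injective _ h2
  · intro l hl x hx hxS
    exact hhead l (Finset.mem_coe.1 hl) x hx hxS
end
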